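/- arXiv:1401.4136 — 4 statements merged into one kernel-verified Lean document; each statement's English description precedes it below -/
import Mathlib

section
/- Let p(x) ∈ F_q[x] be a monic irreducible polynomial of degree k with p(1) ≠ 0 and p(0) ≠ 0. Let m = q^k - 1 and g(x) = (x^m - 1)/((x-1)p(x)). Then p(x) is primitive if and only if g(x) is a polynomial with exactly (q-1)q^(k-1) - 1 nonzero coefficients. -/
open Polynomial Finset

lemma coeff_mul_geom {F : Type*} [Field F] (h : F[X]) (d n : ℕ) (hd : 0 < d)
    (hh : h.natDegree < d) (j : ℕ) :
    (h * ∑ t ∈ range n, X ^ (d * t)).coeff j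
      = if j / d < n then h.coeff (j % d) else 0 := by
  rw [mul_sum, finset_sum_coeff]
  have hterm : ∀ a, (h * X ^ (d * a)).coeff j = if d * a ≤ j then h.coeff (j - d * a) else 0 :=
    fun a => coeff_mul_X_pow' h (d * a) j
  have hzero : ∀ a, a ≠ j / d → (h * X ^ (d * a)).coeff j = 0 := by
    intro a ha
    rw [hterm]
    split_ifs with hle
    · -- d * a ≤ j, a ≠ j / d, so a < j / d, so j - d * a ≥ d
      have ha' : a ≤ j / d := Nat.le_div_iff_mul_le hd |>.mpr (by rw [mul_comm]; exact hle)
      have ha2 : a + 1 ≤ j / d := by omega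
      have h3 : d * (a + 1) ≤ d * (j / d) := Nat.mul_le_mul_left d ha2
      have h4 : d * (j / d) ≤ j := Nat.mul_div_le j d
      have h5 : d * (a + 1) = d * a + d := Nat.mul_succ d a
      exact coeff_eq_zero_of_natDegree_lt (by omega)
    · rfl
  by_cases hlt : j / d < n
  · rw [if_pos hlt]
    rw [Finset.sum_eq_single (j / d) (fun a _ ha => hzero a ha)
      (fun hnotmem => absurd (mem_range.mpr hlt) hnotmem)]
    rw [hterm]
    have h4 : d * (j / d) ≤ j := Nat.mul_div_le j d
    rw [if_pos h4]
    congr 1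
    have := Nat.div_add_mod j d
    omega
  · rw [if_neg hlt]
    exact Finset.sum_eq_zero fun a ha => hzero a (by have := mem_range.mp ha; omega)

lemma support_card_mul_geom {F : Type*} [Field F] (h : F[X]) (d n : ℕ) (hd : 0 < d)
    (hh : h.natDegree < d) :
    (h * ∑ t ∈ range n, X ^ (d * t)).support.card = n * h.support.card := by
  classical
  have hc : ((range n) ×ˢ h.support).card = n * h.support.card := by
    rw [Finset.card_product, Finset.card_range]
  rw [← hc]
  apply Finset.card_bij' (fun j _ => (j / d, j % d)) (fun tr _ => d * tr.1 + tr.2)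
  · intro j hj
    rw [mem_support_iff, coeff_mul_geom h d n hd hh] at hj
    rw [Finset.mem_product, Finset.mem_range]
    split_ifs at hj with hlt
    · exact ⟨hlt, mem_support_iff.mpr hj⟩
    · exact absurd rfl hj
  · intro tr htr
    rw [Finset.mem_product, Finset.mem_range] at htr
    obtain ⟨ht, hr⟩ := htr
    have hrd : tr.2 < d := lt_of_le_of_lt (le_natDegree_of_mem_supp _ hr) hh
    rw [mem_support_iff, coeff_mul_geom h d n hd hh]
    have hdiv : (d * tr.1 + tr.2) / d = tr.1 := by
      rw [Nat.mul_add_div hd, Nat.div_eq_of_lt hrd, add_zero]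
    have hmod : (d * tr.1 + tr.2) % d = tr.2 := by
      rw [Nat.mul_add_mod, Nat.mod_eq_of_lt hrd]
    rw [hdiv, hmod, if_pos ht]
    exact mem_support_iff.mp hr
  · intro j hj
    exact Nat.div_add_mod j d
  · intro tr htr
    rw [Finset.mem_product, Finset.mem_range] at htr
    have hrd : tr.2 < d := lt_of_le_of_lt (le_natDegree_of_mem_supp _ htr.2) hh
    have hdiv : (d * tr.1 + tr.2) / d = tr.1 := by
      rw [Nat.mul_add_div hd, Nat.div_eq_of_lt hrd, add_zero]
    have hmod : (d * tr.1 + tr.2) % d = tr.2 := by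
      rw [Nat.mul_add_mod, Nat.mod_eq_of_lt hrd]
    rw [hdiv, hmod]

/-- The `Q`-power map as a ring hom, given additivity. -/
def powRingHom {E : Type*} [CommRing E] (Q : ℕ) (hQ : 0 < Q)
    (hadd : ∀ x y : E, (x + y) ^ Q = x ^ Q + y ^ Q) : E →+* E where
  toFun x := x ^ Q
  map_one' := one_pow Q
  map_mul' x y := mul_pow x y Q
  map_zero' := zero_pow hQ.ne'
  map_add' := hadd

lemma eval_map_pow {F E : Type*} [Field F] [Field E] [Algebra F E] (Q : ℕ) (hQ : 0 < Q)
    (hadd : ∀ x y : E, (x + y) ^ Q = x ^ Q + y ^ Q)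
    (hfix : ∀ c : F, (algebraMap F E c) ^ Q = algebraMap F E c)
    (r : F[X]) (x : E) :
    (r.map (algebraMap F E)).eval (x ^ Q) = ((r.map (algebraMap F E)).eval x) ^ Q := by
  have h1 : ((r.map (algebraMap F E)).eval x) ^ Q
      = (powRingHom Q hQ hadd) ((r.map (algebraMap F E)).eval x) := rfl
  rw [h1, eval_map, eval_map, hom_eval₂]
  have h2 : (powRingHom Q hQ hadd).comp (algebraMap F E) = algebraMap F E :=
    RingHom.ext fun c => hfix c
  rw [h2]
  rfl
lemma fiber_count {E : Type*} [Field E] [Fintype E] [DecidableEq E] {q k : ℕ}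
    (hq : 2 ≤ q) (hk : 1 ≤ k) (hcard : Fintype.card E = q ^ k)
    (hadd : ∀ x y : E, (x + y) ^ q = x ^ q + y ^ q)
    {c : E} (hc : c ^ q = c) :
    (univ.filter (fun u : E => ∑ i ∈ range k, u ^ q ^ i = c)).card = q ^ (k - 1) := by
  have hq0 : 0 < q := by omega
  set S : E → E := fun u => ∑ i ∈ range k, u ^ q ^ i with hS
  -- additivity of each power map
  have hpow_add : ∀ (i : ℕ) (x y : E), (x + y) ^ q ^ i = x ^ q ^ i + y ^ q ^ i := by
    intro i
    induction i with
    | zero => intro x y; simp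
    | succ i ih =>
      intro x y
      rw [pow_succ, pow_mul, pow_mul, pow_mul, ih, hadd]
  have hSadd : ∀ x y : E, S (x + y) = S x + S y := by
    intro x y
    simp only [hS]
    rw [← Finset.sum_add_distrib]
    exact Finset.sum_congr rfl fun i _ => hpow_add i x y
  have hS0 : S 0 = 0 := by
    simp only [hS]
    exact Finset.sum_eq_zero fun i _ => zero_pow (pow_ne_zero i hq0.ne')
  have hSneg : ∀ x : E, S (-x) = -S x := by
    intro x
    have := hSadd x (-x)
    rw [add_neg_cancel, hS0] at this
    linear_combination -this
  -- fibers over attained values all have the same cardinality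
  have hfiber : ∀ a : E, (univ.filter (fun u : E => S u = S a)).card
      = (univ.filter (fun u : E => S u = 0)).card := by
    intro a
    apply Finset.card_bij' (fun u _ => u - a) (fun z _ => z + a)
    · intro u hu
      rw [Finset.mem_filter] at hu ⊢
      refine ⟨Finset.mem_univ _, ?_⟩
      rw [sub_eq_add_neg, hSadd, hSneg, hu.2, add_neg_cancel]
    · intro z hz
      rw [Finset.mem_filter] at hz ⊢
      refine ⟨Finset.mem_univ _, ?_⟩
      rw [hSadd, hz.2, zero_add]
    · intro u _; ring
    · intro z _; ring
  -- kernel bound via polynomial roots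
  set Z := univ.filter (fun u : E => S u = 0) with hZ
  have hZcard : Z.card ≤ q ^ (k - 1) := by
    set P : E[X] := ∑ i ∈ range k, X ^ q ^ i with hP
    have hPval : ∀ x : E, P.eval x = S x := by
      intro x; simp [hP, hS, eval_finset_sum]
    have hPcoeff : P.coeff (q ^ (k - 1)) = 1 := by
      rw [hP, finset_sum_coeff]
      rw [Finset.sum_eq_single (k - 1)]
      · rw [coeff_X_pow, if_pos rfl]
      · intro i hi hne
        rw [coeff_X_pow, if_neg]
        intro hcontra
        exact hne (Nat.pow_right_injective hq hcontra.symm)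
      · intro hmem
        exact absurd (mem_range.mpr (by omega)) hmem
    have hPne : P ≠ 0 := fun h0 => by simp [h0] at hPcoeff
    have hPdeg : P.natDegree ≤ q ^ (k - 1) := by
      apply Polynomial.natDegree_sum_le_of_forall_le
      intro i hi
      rw [natDegree_X_pow]
      exact Nat.pow_le_pow_right (by omega) (by have := mem_range.mp hi; omega)
    have hsub : Z ⊆ P.roots.toFinset := by
      intro z hz
      rw [Multiset.mem_toFinset, mem_roots hPne]
      rw [hZ, Finset.mem_filter] at hz
      exact (by rw [IsRoot, hPval]; exact hz.2)
    calc Z.card ≤ P.roots.toFinset.card := Finset.card_le_card hsub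
      _ ≤ Multiset.card P.roots := Multiset.toFinset_card_le _
      _ ≤ P.natDegree := P.card_roots'
      _ ≤ q ^ (k - 1) := hPdeg
  -- image is inside the fixed field of x ↦ x^q
  set Fix := univ.filter (fun x : E => x ^ q = x) with hFix
  have hFixcard : Fix.card ≤ q := by
    set P : E[X] := X ^ q - X with hP
    have hPdeg : P.natDegree = q := FiniteField.X_pow_card_sub_X_natDegree_eq E (by omega)
    have hPne : P ≠ 0 := fun h0 => by simp [h0] at hPdeg; omega
    have hsub : Fix ⊆ P.roots.toFinset := by
      intro z hz
      rw [Multiset.mem_toFinset, mem_roots hPne]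
      rw [hFix, Finset.mem_filter] at hz
      refine (by rw [IsRoot, hP]; simp [hz.2])
    calc Fix.card ≤ P.roots.toFinset.card := Finset.card_le_card hsub
      _ ≤ Multiset.card P.roots := Multiset.toFinset_card_le _
      _ ≤ P.natDegree := P.card_roots'
      _ = q := hPdeg
  have hSfix : ∀ u : E, S u ∈ Fix := by
    intro u
    rw [hFix, Finset.mem_filter]
    refine ⟨Finset.mem_univ _, ?_⟩
    have hφ : (S u) ^ q = ∑ i ∈ range k, u ^ q ^ (i + 1) := by
      have h1 : (S u) ^ q = (powRingHom q hq0 hadd) (S u) := rfl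
      rw [h1, hS, map_sum]
      apply Finset.sum_congr rfl
      intro i _
      show (u ^ q ^ i) ^ q = u ^ q ^ (i + 1)
      rw [← pow_mul, ← pow_succ]
    rw [hφ]
    have huqk : u ^ q ^ k = u := by rw [← hcard]; exact FiniteField.pow_card u
    have h2 : ∑ i ∈ range k, u ^ q ^ (i + 1)
        = (∑ i ∈ range k, u ^ q ^ i) + u ^ q ^ k - u ^ q ^ 0 := by
      rw [← Finset.sum_range_succ]
      rw [Finset.sum_range_succ' (fun i => u ^ q ^ i) k]
      ring
    rw [h2, huqk, pow_zero, pow_one]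
    show S u + u - u = S u
    ring
  -- counting
  set Im := univ.image S with hIm
  have hcount : (univ : Finset E).card = ∑ b ∈ Im, (univ.filter (fun u => S u = b)).card :=
    Finset.card_eq_sum_card_image S univ
  have hfib_eq : ∀ b ∈ Im, (univ.filter (fun u => S u = b)).card = Z.card := by
    intro b hb
    rw [hIm, Finset.mem_image] at hb
    obtain ⟨a, _, rfl⟩ := hb
    exact hfiber a
  have hsum : (univ : Finset E).card = Im.card * Z.card := by
    rw [hcount, Finset.sum_congr rfl hfib_eq, Finset.sum_const, smul_eq_mul]
  have hImcard : Im.card ≤ q := by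
    refine le_trans (Finset.card_le_card ?_) hFixcard
    intro b hb
    rw [hIm, Finset.mem_image] at hb
    obtain ⟨a, _, rfl⟩ := hb
    exact hSfix a
  have hqk : q ^ k = q * q ^ (k - 1) := by
    conv_lhs => rw [show k = (k - 1) + 1 by omega]
    rw [pow_succ]; ring
  have hZeq : Z.card = q ^ (k - 1) := by
    have h1 : q ^ k = Im.card * Z.card := by
      rw [← hcard, ← Finset.card_univ]; exact hsum
    have h2 : Im.card * Z.card ≤ q * Z.card := Nat.mul_le_mul_right _ hImcard
    have h3 : q * Z.card ≤ q * q ^ (k - 1) := Nat.mul_le_mul_left _ hZcard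
    have h4 : q * Z.card = q * q ^ (k - 1) := by omega
    exact Nat.eq_of_mul_eq_mul_left hq0 h4
  have hImq : Im.card = q := by
    have h1 : q ^ k = Im.card * Z.card := by
      rw [← hcard, ← Finset.card_univ]; exact hsum
    rw [hZeq] at h1
    have hpos : 0 < q ^ (k - 1) := Nat.pow_pos hq0
    have := hqk
    exact Nat.eq_of_mul_eq_mul_right hpos (by omega)
  have hImFix : Im = Fix := by
    apply Finset.eq_of_subset_of_card_le
    · intro b hb
      rw [hIm, Finset.mem_image] at hb
      obtain ⟨a, _, rfl⟩ := hb
      exact hSfix a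
    · rw [hImq]; exact hFixcard
  have hcFix : c ∈ Im := by
    rw [hImFix, hFix, Finset.mem_filter]
    exact ⟨Finset.mem_univ _, hc⟩
  rw [hIm, Finset.mem_image] at hcFix
  obtain ⟨a, _, rfl⟩ := hcFix
  rw [hfiber a]; exact hZeq

theorem fitzgerald_criterion {F : Type*} [Field F] [Fintype F] {k : ℕ}
    (p : Polynomial F) (hmon : p.Monic) (hirr : Irreducible p) (hdeg : p.natDegree = k)
    (h1 : p.eval 1 ≠ 0) (h0 : p.eval 0 ≠ 0)
    {E : Type*} [Field E] [Algebra F E] (hE : Module.finrank F E = k)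
    (α : E) (hα : Polynomial.aeval α p = 0)
    (g : Polynomial F)
    (hg : (X - 1) * p * g = X ^ (Fintype.card F ^ k - 1) - 1) :
    orderOf α = Fintype.card F ^ k - 1 ↔
      g.support.card = (Fintype.card F - 1) * Fintype.card F ^ (k - 1) - 1 := by
  classical
  set q := Fintype.card F with hqdef
  set m := q ^ k - 1 with hmdef
  have hq2 : 2 ≤ q := Fintype.one_lt_card
  have hk1 : 1 ≤ k := by rw [← hdeg]; exact hirr.natDegree_pos
  have hqk1 : 1 ≤ q ^ k := Nat.one_le_pow _ _ (by omega)
  have hqk2 : 2 ≤ q ^ k := le_trans hq2 (Nat.le_self_pow (by omega) q)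
  have hm1 : 1 ≤ m := by omega
  -- E is a finite field of cardinality q^k
  have hk0 : 0 < Module.finrank F E := by rw [hE]; omega
  haveI : Module.Finite F E := Module.finite_of_finrank_pos hk0
  haveI : Finite E := Module.finite_of_finite F
  cases nonempty_fintype E
  have hcardE : Fintype.card E = q ^ k := by rw [Module.card_eq_pow_finrank (K := F) (V := E), hE]
  have hA : Function.Injective (algebraMap F E) := (algebraMap F E).injective
  have hα0 : α ≠ 0 := by
    intro h0'
    rw [h0', aeval_def, eval₂_at_zero] at hα
    have : p.coeff 0 = 0 := by rwa [map_eq_zero_iff _ hA] at hα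
    exact h0 (by rwa [← coeff_zero_eq_eval_zero])
  have hα1 : α ≠ 1 := by
    intro h1'
    rw [h1', aeval_def, eval₂_at_one] at hα
    exact h1 (by rwa [map_eq_zero_iff _ hA] at hα)
  have hαm : α ^ m = 1 := by
    have := FiniteField.pow_card_sub_one_eq_one α hα0
    rwa [hcardE] at this
  have hfin : IsOfFinOrder α := isOfFinOrder_iff_pow_eq_one.mpr ⟨m, by omega, hαm⟩
  have hd_dvd : orderOf α ∣ m := orderOf_dvd_of_pow_eq_one hαm
  have hd_pos : 0 < orderOf α := hfin.orderOf_pos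
  -- cast of m into F
  have hmF : ((m : ℕ) : F) = -1 := by
    have hc : ((q ^ k : ℕ) : F) = 0 := by
      rw [Nat.cast_pow, show ((q : ℕ) : F) = 0 from FiniteField.cast_card_eq_zero F]
      exact zero_pow (by omega)
    rw [hmdef, Nat.cast_sub hqk1, hc, Nat.cast_one, zero_sub]
  -- p(1) * g(1) = -1
  have hpg1 : p.eval 1 * g.eval 1 = -1 := by
    have h := congrArg (fun r => Polynomial.eval 1 (derivative r)) hg
    simp only [derivative_mul, derivative_sub, derivative_one, derivative_X, derivative_X_pow,
      eval_add, eval_mul, eval_sub, eval_one, eval_X, eval_pow, eval_natCast, eval_C,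
      one_pow, sub_self, zero_mul, mul_zero, add_zero, zero_add, mul_one, one_mul,
      sub_zero] at h
    rw [hmF] at h
    linear_combination h
  have hg1ne : g.eval 1 ≠ 0 := by
    intro hz; rw [hz, mul_zero] at hpg1; exact one_ne_zero (neg_eq_zero.mp hpg1.symm)
  have hgne : g ≠ 0 := fun hz => hg1ne (by rw [hz, eval_zero])
  have hXC : (X - 1 : F[X]) = X - C 1 := by rw [C_1]
  have hX1 : (X - 1 : F[X]) ≠ 0 := by rw [hXC]; exact X_sub_C_ne_zero 1
  have hpne : p ≠ 0 := hmon.ne_zero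
  have hgdeg : 1 + k + g.natDegree = m := by
    have hh := congrArg natDegree hg
    rw [natDegree_mul (mul_ne_zero hX1 hpne) hgne, natDegree_mul hX1 hpne, hXC,
      natDegree_X_sub_C, hdeg, ← C_1, natDegree_X_pow_sub_C] at hh
    omega
  have hgdeglt : g.natDegree < m := by omega
  -- the target arithmetic identity
  have hqk' : q ^ k = q * q ^ (k - 1) := by
    rw [← pow_succ']
    congr 1
    omega
  have hq1le : 2 * q ^ (k - 1) ≤ q * q ^ (k - 1) := Nat.mul_le_mul_right _ hq2
  have hQ11 : 1 ≤ q ^ (k - 1) := Nat.one_le_pow _ _ (by omega)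
  have htarget : (q - 1) * q ^ (k - 1) - 1 = m - q ^ (k - 1) := by
    rw [Nat.sub_mul, one_mul, hmdef, hqk']
    omega
  constructor
  · -- forward direction
    intro hord
    have hQ1m : q ^ (k - 1) ≤ m := by rw [hmdef, hqk']; omega
    -- characteristic of F and E
    set cp := ringChar F with hcp
    haveI : CharP F cp := ringChar.charP F
    have hcp_prime : cp.Prime := CharP.char_is_prime F cp
    haveI := Fact.mk hcp_prime
    haveI : CharP E cp := charP_of_injective_algebraMap hA cp
    obtain ⟨nc, -, hqcard⟩ := FiniteField.card F cp
    have hq0 : 0 < q := by omega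
    haveI : ExpChar E cp := ExpChar.prime hcp_prime
    have hadd : ∀ x y : E, (x + y) ^ q = x ^ q + y ^ q := by
      intro x y
      rw [hqdef, hqcard]
      exact add_pow_char_pow x y cp ↑nc
    have hfix : ∀ c : F, (algebraMap F E c) ^ q = algebraMap F E c := by
      intro c
      rw [← map_pow, FiniteField.pow_card]
    -- mapped polynomials
    set Pm := p.map (algebraMap F E) with hPm
    set Gm := g.map (algebraMap F E) with hGm
    have hgE : (X - 1) * Pm * Gm = X ^ m - 1 := by
      have hmap := congrArg (Polynomial.map (algebraMap F E)) hg
      simpa only [Polynomial.map_mul, Polynomial.map_sub, Polynomial.map_pow,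
        Polynomial.map_one, Polynomial.map_X] using hmap
    have hPmα : Pm.eval α = 0 := by rw [hPm, eval_map, ← aeval_def]; exact hα
    have hPmne : Pm ≠ 0 := by
      rw [hPm, Ne, Polynomial.map_eq_zero_iff hA]
      exact hpne
    have hPmdeg : Pm.natDegree = k := by
      rw [hPm, hmon.natDegree_map, hdeg]
    have hGm1 : Gm.eval 1 = algebraMap F E (g.eval 1) := by rw [hGm, eval_map, eval₂_at_one]
    have hbne : Gm.eval 1 ≠ 0 := by
      rw [hGm1, map_ne_zero_iff _ hA]
      exact hg1ne
    have hmE : ((m : ℕ) : E) = -1 := by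
      rw [show ((m : ℕ) : E) = algebraMap F E ((m : ℕ) : F) from (map_natCast _ m).symm, hmF,
        map_neg, map_one]
    -- Frobenius commutes with evaluation of mapped polynomials
    have frob_eval : ∀ (r : Polynomial F) (i : ℕ) (x : E),
        (r.map (algebraMap F E)).eval (x ^ q ^ i) = ((r.map (algebraMap F E)).eval x) ^ q ^ i := by
      intro r i
      induction i with
      | zero => intro x; simp
      | succ i ih =>
        intro x
        have e1 : x ^ q ^ (i + 1) = (x ^ q ^ i) ^ q := by rw [← pow_mul, ← pow_succ]
        rw [e1, eval_map_pow q hq0 hadd hfix, ih, ← pow_mul, ← pow_succ]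
    set δ := Gm.eval α with hδ
    have hδne : δ ≠ 0 := by
      intro hz
      have hev := congrArg (Polynomial.eval α) (congrArg derivative hgE)
      rw [derivative_sub, derivative_one, sub_zero, derivative_X_pow,
        derivative_mul, derivative_mul, derivative_sub, derivative_X, derivative_one,
        sub_zero] at hev
      simp only [eval_add, eval_mul, eval_sub, eval_pow, eval_X, eval_one, eval_C,
        eval_natCast, hPmα, ← hδ, hz, mul_zero, zero_mul, add_zero, zero_add, one_mul] at hev
      rw [hmE] at hev
      have hne' : α ^ (m - 1) ≠ 0 := pow_ne_zero _ hα0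
      simp only [neg_mul, one_mul] at hev
      exact hne' (neg_eq_zero.mp hev.symm)
    -- injectivity of powers of α in the range [1, m]
    have hpow_inj : ∀ s1 s2 : ℕ, 1 ≤ s1 → s1 ≤ m → 1 ≤ s2 → s2 ≤ m → α ^ s1 = α ^ s2 →
        s1 = s2 := by
      have key2 : ∀ t1 t2 : ℕ, t1 ≤ t2 → 1 ≤ t1 → t2 ≤ m → α ^ t1 = α ^ t2 → t1 = t2 := by
        intro t1 t2 hle h1' h2' hpow
        set u : Eˣ := Units.mk0 α hα0 with hu
        have hordu : orderOf u = m := by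
          rw [← hord, ← orderOf_units]
          rfl
        have hup : u ^ t1 = u ^ t2 := by
          apply Units.ext
          rwa [Units.val_pow_eq_pow_val, Units.val_pow_eq_pow_val]
        have hmod := pow_eq_pow_iff_modEq.mp hup
        rw [hordu] at hmod
        have hdvd := (Nat.modEq_iff_dvd' hle).mp hmod
        rcases Nat.eq_zero_or_pos (t2 - t1) with h0' | hpos'
        · omega
        · have := Nat.le_of_dvd hpos' hdvd; omega
      intro s1 s2 h11 h1m h21 h2m hpow
      rcases le_total s1 s2 with hle | hle
      · exact key2 s1 s2 hle h11 h2m hpow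
      · exact (key2 s2 s1 hle h21 h1m hpow.symm).symm
    -- bounds on q^i for i < k
    have hqi_le : ∀ i : ℕ, i < k → q ^ i ≤ m := by
      intro i hi
      calc q ^ i ≤ q ^ (k - 1) := Nat.pow_le_pow_right (by omega) (by omega)
        _ ≤ m := hQ1m
    have hqi_1 : ∀ i : ℕ, 1 ≤ q ^ i := fun i => Nat.one_le_pow _ _ (by omega)
    -- the root set of Pm
    have hrootval : ∀ i : ℕ, Pm.eval (α ^ q ^ i) = 0 := by
      intro i
      have h' := frob_eval p i α
      rw [← hPm] at h'
      rw [h', hPmα]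
      exact zero_pow (by positivity)
    have hRinj' : ∀ i ∈ range k, ∀ j ∈ range k,
        α ^ q ^ i = α ^ q ^ j → i = j := by
      intro i hi j hj hij
      have hi' := mem_range.mp hi
      have hj' := mem_range.mp hj
      have := hpow_inj (q ^ i) (q ^ j) (hqi_1 i) (hqi_le i hi') (hqi_1 j) (hqi_le j hj') hij
      exact Nat.pow_right_injective hq2 this
    set R : Finset E := (range k).image (fun i => α ^ q ^ i) with hR
    have hRcard : R.card = k := by
      rw [hR, Finset.card_image_of_injOn
        (fun a ha b hb hab => hRinj' a (Finset.mem_coe.mp ha) b (Finset.mem_coe.mp hb) hab),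
        card_range]
    have hRsub : R ⊆ Pm.roots.toFinset := by
      intro x hx
      rw [hR, Finset.mem_image] at hx
      obtain ⟨i, -, rfl⟩ := hx
      rw [Multiset.mem_toFinset, mem_roots hPmne]
      exact hrootval i
    have hReq : R = Pm.roots.toFinset := by
      apply Finset.eq_of_subset_of_card_le hRsub
      calc Pm.roots.toFinset.card ≤ Multiset.card Pm.roots := Multiset.toFinset_card_le _
        _ ≤ Pm.natDegree := Pm.card_roots'
        _ = k := hPmdeg
        _ = R.card := hRcard.symm
    have hPnroot : ∀ x : E, x ∉ R → Pm.eval x ≠ 0 := by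
      intro x hx hev
      apply hx
      rw [hReq, Multiset.mem_toFinset, mem_roots hPmne]
      exact hev
    have h1R : (1 : E) ∉ R := by
      intro hmem
      rw [hReq, Multiset.mem_toFinset, mem_roots hPmne] at hmem
      have hPm1 : Pm.eval 1 = algebraMap F E (p.eval 1) := by rw [hPm, eval_map, eval₂_at_one]
      rw [IsRoot, hPm1] at hmem
      exact h1 (hA (by rw [hmem, map_zero]))
    have hGmdeg : Gm.natDegree < m := lt_of_le_of_lt natDegree_map_le hgdeglt
    -- the key coefficient formula
    have key : ∀ j, j < m → algebraMap F E (g.coeff j)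
        = -(Gm.eval 1 + ∑ i ∈ range k, (δ * α ^ (m - j)) ^ q ^ i) := by
      intro j hj
      set e := m - j with he
      have he1 : 1 ≤ e := by omega
      have hem : e ≤ m := by omega
      have hsum1 : ∑ u : Eˣ, Gm.eval ↑u * (↑u : E) ^ e = -(algebraMap F E (g.coeff j)) := by
        have hstep : ∀ u : Eˣ, Gm.eval ↑u * (↑u : E) ^ e
            = ∑ t ∈ range m, Gm.coeff t * (↑u : E) ^ (t + e) := by
          intro u
          rw [eval_eq_sum_range' hGmdeg, Finset.sum_mul]
          exact Finset.sum_congr rfl fun t _ => by rw [pow_add, mul_assoc]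
        rw [Finset.sum_congr rfl fun u _ => hstep u, Finset.sum_comm]
        have hinner : ∀ t ∈ range m, ∑ u : Eˣ, Gm.coeff t * (↑u : E) ^ (t + e)
            = Gm.coeff t * (if m ∣ (t + e) then -1 else 0) := by
          intro t ht
          rw [← Finset.mul_sum]
          congr 1
          have h' := FiniteField.sum_pow_units E (t + e)
          rwa [hcardE] at h'
        rw [Finset.sum_congr rfl hinner, Finset.sum_eq_single j]
        · rw [if_pos (show m ∣ j + e from ⟨1, by omega⟩)]
          rw [hGm, coeff_map]
          ring
        · intro t ht htj
          have htlt := mem_range.mp ht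
          rw [if_neg, mul_zero]
          intro hdvd
          obtain ⟨c, hc⟩ := hdvd
          rcases Nat.lt_or_ge c 2 with hc2 | hc2
          · interval_cases c <;> omega
          · have : m * 2 ≤ m * c := Nat.mul_le_mul_left m hc2
            omega
        · intro hnotmem
          exact absurd (mem_range.mpr (by omega)) hnotmem
      have hsum2 : ∑ u : Eˣ, Gm.eval ↑u * (↑u : E) ^ e
          = Gm.eval 1 + ∑ i ∈ range k, (δ * α ^ e) ^ q ^ i := by
        set f : E → E := fun x => Gm.eval x * x ^ e with hf
        have hf0 : f 0 = 0 := by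
          rw [hf]
          simp [zero_pow (by omega : e ≠ 0)]
        have hconv : ∑ u : Eˣ, f ↑u = ∑ x : E, f x := by
          let φ : Eˣ ↪ E := ⟨fun u => ↑u, fun _ _ h => Units.ext h⟩
          have himg : Finset.univ.map φ = Finset.univ \ {(0 : E)} := by
            ext x
            constructor
            · intro hx
              obtain ⟨u, -, hu⟩ := Finset.mem_map.mp hx
              rw [Finset.mem_sdiff, Finset.mem_singleton]
              exact ⟨Finset.mem_univ _, by rw [← hu]; exact u.ne_zero⟩
            · intro hx
              rw [Finset.mem_sdiff, Finset.mem_singleton] at hx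
              obtain ⟨u, hu⟩ := isUnit_iff_ne_zero.mpr hx.2
              exact Finset.mem_map.mpr ⟨u, Finset.mem_univ _, hu⟩
          calc ∑ u : Eˣ, f ↑u = ∑ x ∈ Finset.univ.map φ, f x := (Finset.sum_map _ φ f).symm
            _ = ∑ x ∈ Finset.univ \ {(0 : E)}, f x := by rw [himg]
            _ = ∑ x : E, f x := by
              rw [Finset.sum_sdiff_eq_sub (Finset.subset_univ _), Finset.sum_singleton, hf0,
                sub_zero]
        have hvanish : ∀ x : E, x ∉ insert (1 : E) R → f x = 0 := by
          intro x hxmem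
          by_cases hx0 : x = 0
          · rw [hx0]; exact hf0
          · have hxm : x ^ m = 1 := by
              have h' := FiniteField.pow_card_sub_one_eq_one x hx0
              rwa [hcardE] at h'
            have hx1 : x ≠ 1 := fun h' => hxmem (h' ▸ Finset.mem_insert_self 1 R)
            have hxR : x ∉ R := fun h' => hxmem (Finset.mem_insert_of_mem h')
            have heval := congrArg (Polynomial.eval x) hgE
            rw [eval_mul, eval_mul, eval_sub, eval_X, eval_one, eval_sub, eval_pow, eval_X,
              eval_one, hxm, sub_self] at heval
            have hGm0 : Gm.eval x = 0 := by
              rcases mul_eq_zero.mp heval with h' | h'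
              · rcases mul_eq_zero.mp h' with h'' | h''
                · exact absurd h'' (sub_ne_zero.mpr hx1)
                · exact absurd h'' (hPnroot x hxR)
              · exact h'
            rw [hf]
            simp only [hGm0, zero_mul]
        have hsubset : ∑ x : E, f x = ∑ x ∈ insert (1 : E) R, f x :=
          (Finset.sum_subset (Finset.subset_univ _) fun x _ hx => hvanish x hx).symm
        rw [hconv, hsubset, Finset.sum_insert h1R]
        congr 1
        · rw [hf]; simp
        · rw [hR, Finset.sum_image hRinj']
          apply Finset.sum_congr rfl
          intro i hi
          have hGval : Gm.eval (α ^ q ^ i) = δ ^ q ^ i := by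
            have h' := frob_eval g i α
            rw [← hGm] at h'
            rw [h', ← hδ]
          show Gm.eval (α ^ q ^ i) * (α ^ q ^ i) ^ e = (δ * α ^ e) ^ q ^ i
          rw [hGval, mul_pow, ← pow_mul, mul_comm (q ^ i) e, pow_mul]
      rw [← hsum2, hsum1, neg_neg]
    -- counting zero coefficients
    have hsupp_eq : g.support = (range m).filter (fun j => ¬ g.coeff j = 0) := by
      ext j
      simp only [mem_support_iff, Finset.mem_filter, Finset.mem_range]
      constructor
      · intro hne; exact ⟨lt_of_le_of_lt (le_natDegree_of_ne_zero hne) hgdeglt, hne⟩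
      · exact fun h' => h'.2
    have hcards : ((range m).filter (fun j => g.coeff j = 0)).card + g.support.card = m := by
      rw [hsupp_eq]
      rw [Finset.card_filter_add_card_filter_not, card_range]
    have hzero_card : ((range m).filter (fun j => g.coeff j = 0)).card = q ^ (k - 1) := by
      have hcond : ∀ j ∈ range m,
          (g.coeff j = 0 ↔ ∑ i ∈ range k, (δ * α ^ (m - j)) ^ q ^ i = -(Gm.eval 1)) := by
        intro j hj
        have hk' := key j (mem_range.mp hj)
        rw [← map_eq_zero_iff (algebraMap F E) hA, hk', neg_eq_zero]
        constructor
        · intro h'; linear_combination h'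
        · intro h'; linear_combination h'
      rw [Finset.filter_congr hcond]
      set ψ : ℕ → E := fun j => δ * α ^ (m - j) with hψ
      have hψ_inj : ∀ j1 ∈ range m, ∀ j2 ∈ range m, ψ j1 = ψ j2 → j1 = j2 := by
        intro j1 hj1 j2 hj2 hψeq
        have hj1' := mem_range.mp hj1
        have hj2' := mem_range.mp hj2
        have hαeq : α ^ (m - j1) = α ^ (m - j2) := mul_left_cancel₀ hδne hψeq
        have := hpow_inj (m - j1) (m - j2) (by omega) (by omega) (by omega) (by omega) hαeq
        omega
      have hfilt_ne : (Finset.univ.filter (fun u : E => ¬ u = 0)).card = m := by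
        have h' : Finset.univ.filter (fun u : E => ¬ u = 0) = Finset.univ.erase (0 : E) := by
          rw [Finset.filter_ne']
        rw [h', Finset.card_erase_of_mem (Finset.mem_univ _), Finset.card_univ, hcardE]
      have himg : (range m).image ψ = Finset.univ.filter (fun u : E => ¬ u = 0) := by
        apply Finset.eq_of_subset_of_card_le
        · intro x hx
          rw [Finset.mem_image] at hx
          obtain ⟨j, -, rfl⟩ := hx
          rw [Finset.mem_filter]
          exact ⟨Finset.mem_univ _, mul_ne_zero hδne (pow_ne_zero _ hα0)⟩
        · rw [hfilt_ne, Finset.card_image_of_injOn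
            (fun a ha b hb hab => hψ_inj a (Finset.mem_coe.mp ha) b (Finset.mem_coe.mp hb) hab),
            card_range]
      have hstep1 : ((range m).filter
            (fun j => ∑ i ∈ range k, (ψ j) ^ q ^ i = -(Gm.eval 1))).card
          = (((range m).image ψ).filter
            (fun u => ∑ i ∈ range k, u ^ q ^ i = -(Gm.eval 1))).card := by
        rw [Finset.filter_image]
        rw [Finset.card_image_of_injOn]
        intro a ha b hb hab
        have ha' := Finset.mem_coe.mp ha
        have hb' := Finset.mem_coe.mp hb
        rw [Finset.mem_filter] at ha' hb'
        exact hψ_inj a (ha'.1) b (hb'.1) hab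
      rw [hstep1, himg]
      have hdrop : (Finset.univ.filter (fun u : E => ¬ u = 0)).filter
            (fun u => ∑ i ∈ range k, u ^ q ^ i = -(Gm.eval 1))
          = Finset.univ.filter (fun u : E => ∑ i ∈ range k, u ^ q ^ i = -(Gm.eval 1)) := by
        ext x
        simp only [Finset.mem_filter, Finset.mem_univ, true_and]
        constructor
        · exact fun h' => h'.2
        · intro h'
          refine ⟨?_, h'⟩
          intro hx0
          rw [hx0] at h'
          have hz : ∑ i ∈ range k, (0 : E) ^ q ^ i = 0 :=
            Finset.sum_eq_zero fun i _ => zero_pow (by positivity)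
          rw [hz] at h'
          exact hbne (neg_eq_zero.mp h'.symm)
      rw [hdrop]
      have hc : (-(Gm.eval 1)) ^ q = -(Gm.eval 1) := by
        rw [hGm1, ← map_neg]
        exact hfix _
      exact fiber_count hq2 hk1 hcardE hadd hc
    rw [htarget]
    omega
  · -- backward direction
    intro hw
    set d := orderOf α with hddef
    have hpmin : minpoly F α = p := (minpoly.eq_of_irreducible_of_monic hirr hα hmon).symm
    have hαd : α ^ d = 1 := pow_orderOf_eq_one α
    have hpd : p ∣ X ^ d - 1 := by
      rw [← hpmin]
      apply minpoly.dvd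
      rw [map_sub, map_pow, aeval_X, map_one, hαd, sub_self]
    have hX1d : (X - 1 : F[X]) ∣ X ^ d - 1 := by
      rw [hXC, dvd_iff_isRoot]
      simp [IsRoot]
    have hcop : IsCoprime (X - 1 : F[X]) p := by
      rw [hXC]
      apply (Polynomial.irreducible_X_sub_C (1 : F)).coprime_iff_not_dvd.mpr
      rw [dvd_iff_isRoot]
      exact h1
    have hmul_dvd : (X - 1) * p ∣ X ^ d - 1 := hcop.mul_dvd hX1d hpd
    obtain ⟨h, hh⟩ := hmul_dvd
    set n := m / d with hndef
    have hdn : d * n = m := Nat.mul_div_cancel' hd_dvd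
    have hgeom : (X ^ d - 1 : F[X]) * (∑ t ∈ range n, X ^ (d * t)) = X ^ m - 1 := by
      have hgs := geom_sum_mul (X ^ d : F[X]) n
      calc (X ^ d - 1 : F[X]) * (∑ t ∈ range n, X ^ (d * t))
          = (∑ t ∈ range n, ((X : F[X]) ^ d) ^ t) * (X ^ d - 1) := by
            rw [mul_comm]; congr 1; exact Finset.sum_congr rfl fun t _ => pow_mul X d t
        _ = ((X : F[X]) ^ d) ^ n - 1 := hgs
        _ = X ^ m - 1 := by rw [← pow_mul, hdn]
    have hfact : (X - 1) * p * (h * ∑ t ∈ range n, X ^ (d * t)) = X ^ m - 1 := by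
      rw [← mul_assoc, ← hh, hgeom]
    have hgeq : g = h * ∑ t ∈ range n, X ^ (d * t) :=
      mul_left_cancel₀ (mul_ne_zero hX1 hpne) (hg.trans hfact.symm)
    have hXdne : (X ^ d - 1 : F[X]) ≠ 0 := by
      intro h0'
      have hcd := congrArg natDegree h0'
      rw [← C_1, natDegree_X_pow_sub_C, natDegree_zero] at hcd
      omega
    have hhne : h ≠ 0 := by
      rintro rfl; rw [mul_zero] at hh; exact hXdne hh
    have hhdeg : 1 + k + h.natDegree = d := by
      have hc := congrArg natDegree hh
      rw [natDegree_mul (mul_ne_zero hX1 hpne) hhne, natDegree_mul hX1 hpne, hXC,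
        natDegree_X_sub_C, hdeg, ← C_1, natDegree_X_pow_sub_C] at hc
      omega
    have hsupp : g.support.card = n * h.support.card := by
      rw [hgeq]; exact support_card_mul_geom h d n hd_pos (by omega)
    have hw' : g.support.card = m - q ^ (k - 1) := by rw [hw, htarget]
    have hQ1m : q ^ (k - 1) ≤ m := by
      rw [hmdef, hqk']; omega
    have hn_dvd_m : n ∣ m := ⟨d, by rw [← hdn, mul_comm]⟩
    have hn_dvd_s : n ∣ g.support.card := hsupp ▸ Dvd.intro _ rfl
    have hnq : n ∣ q ^ (k - 1) := by
      have hsub : q ^ (k - 1) = m - g.support.card := by omega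
      rw [hsub]
      exact Nat.dvd_sub hn_dvd_m hn_dvd_s
    have hqm : Nat.Coprime (q ^ k) m := by
      have hqs : q ^ k = 1 + m := by omega
      rw [hqs]
      exact Nat.coprime_add_self_left.mpr (Nat.coprime_one_left m)
    have hk0' : 0 < k := hk1
    have hqm' : Nat.Coprime q m := (Nat.coprime_pow_left_iff hk0' q m).mp hqm
    have hcop2 : Nat.Coprime n (q ^ (k - 1)) :=
      Nat.Coprime.coprime_dvd_left hn_dvd_m (hqm'.symm.pow_right _)
    have hn1 : n = 1 := by
      rw [← Nat.gcd_eq_left hnq]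
      exact hcop2
    rw [hn1, mul_one] at hdn
    omega
end

section
/- Let p(x) ∈ F_q[x] be monic irreducible of degree k with p(0) ≠ 0, and let q(x) = x^k p(1/x)/p(0) be its monic reciprocal polynomial with root α ∈ F_{q^k}. Then the formal power series expansion of 1/p(x) is (1/a)·∑_{r≥0} s_{k-1+r} x^r, where a = p(0)·(leading-type constant making p(x) = a·∏(1 - α_i x)), and s_r = Tr_{F_{q^k}/F_q}(α^r / q'(α)). -/
open Polynomial

lemma my_reverse_reverse {F : Type*} [Field F] (p : F[X]) (h0 : p.coeff 0 ≠ 0) :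
    p.reverse.reverse = p := by
  have htd : p.natTrailingDegree = 0 := natTrailingDegree_eq_zero.mpr (Or.inr h0)
  have hnd : p.reverse.natDegree = p.natDegree := by
    rw [reverse_natDegree, htd, Nat.sub_zero]
  ext n
  rw [coeff_reverse, hnd, coeff_reverse]
  rcases le_or_gt n p.natDegree with h | h
  · rw [revAt_le h, revAt_le (Nat.sub_le _ _), Nat.sub_sub_self h]
  · rw [revAt_eq_self_of_lt h, revAt_eq_self_of_lt h, coeff_eq_zero_of_natDegree_lt (hnd ▸ h)]

lemma my_isUnit_of_isUnit_reverse {F : Type*} [Field F] {u : F[X]} (h0 : u.coeff 0 ≠ 0)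
    (h : IsUnit u.reverse) : IsUnit u := by
  have htd : u.natTrailingDegree = 0 := natTrailingDegree_eq_zero.mpr (Or.inr h0)
  have hu : u ≠ 0 := fun h => h0 (by simp [h])
  rw [Polynomial.isUnit_iff_degree_eq_zero] at h ⊢
  rw [degree_eq_natDegree hu, Nat.cast_eq_zero]
  have := degree_eq_natDegree (by simpa using hu : u.reverse ≠ 0) ▸ h
  rw [reverse_natDegree, htd, Nat.sub_zero] at this
  exact_mod_cast this

lemma my_qp_irreducible {F : Type*} [Field F] (p : F[X]) (hmon : p.Monic) (hirr : Irreducible p)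
    (h0 : p.coeff 0 ≠ 0) : Irreducible (C (p.coeff 0)⁻¹ * p.reverse) := by
  set qp := C (p.coeff 0)⁻¹ * p.reverse with hqp
  have h0inv : (p.coeff 0)⁻¹ ≠ 0 := inv_ne_zero h0
  have hrev : qp.reverse = C (p.coeff 0)⁻¹ * p := by
    rw [hqp, reverse_mul_of_domain, reverse_C, my_reverse_reverse p h0]
  have hqp0 : qp.coeff 0 ≠ 0 := by
    rw [hqp, coeff_C_mul, coeff_zero_reverse]
    exact mul_ne_zero h0inv (hmon.leadingCoeff ▸ one_ne_zero)
  constructor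
  · intro h
    obtain ⟨c, hc, hcq⟩ := Polynomial.isUnit_iff.mp h
    apply hirr.not_isUnit
    have : C (p.coeff 0) * qp.reverse = p := by
      rw [hrev, ← mul_assoc, ← C_mul, mul_inv_cancel₀ h0, C_1, one_mul]
    rw [← hcq, reverse_C, ← C_mul] at this
    exact this ▸ (isUnit_C.mpr ((h0.isUnit).mul hc))
  · intro u v huv
    have hu0 : u.coeff 0 ≠ 0 := fun h => hqp0 (by simp [huv, mul_coeff_zero, h])
    have hv0 : v.coeff 0 ≠ 0 := fun h => hqp0 (by simp [huv, mul_coeff_zero, h])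
    have hp : p = (C (p.coeff 0) * u.reverse) * v.reverse := by
      calc p = C (p.coeff 0) * (C (p.coeff 0)⁻¹ * p) := by
              rw [← mul_assoc, ← C_mul, mul_inv_cancel₀ h0, C_1, one_mul]
        _ = C (p.coeff 0) * (u.reverse * v.reverse) := by
              rw [← hrev, huv, reverse_mul_of_domain]
        _ = _ := by ring
    rcases hirr.isUnit_or_isUnit hp with h | h
    · exact Or.inl (my_isUnit_of_isUnit_reverse hu0 (isUnit_of_mul_isUnit_right h))
    · exact Or.inr (my_isUnit_of_isUnit_reverse hv0 h)

lemma my_trace_pow_div {K L : Type*} [Field K] [Field L] [Algebra K L] [FiniteDimensional K L]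
    [Algebra.IsSeparable K L] (pb : PowerBasis K L) :
    ∀ m, m < pb.dim →
      Algebra.trace K L (pb.gen ^ m / aeval pb.gen (derivative (minpoly K pb.gen)))
        = if m = pb.dim - 1 then 1 else 0 := by
  have hint : IsIntegral K pb.gen := pb.isIntegral_gen
  set d := aeval pb.gen (derivative (minpoly K pb.gen)) with hd
  have hdim : 0 < pb.dim := pb.dim_pos
  have hnd : (minpolyDiv K pb.gen).natDegree = pb.dim - 1 := by
    have h := natDegree_minpolyDiv_succ (R := K) (x := pb.gen) hint
    rw [pb.natDegree_minpoly] at h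
    omega
  have key : ∀ i : Fin pb.dim,
      Algebra.trace K L ((minpolyDiv K pb.gen).coeff i / d) = if (i : ℕ) = 0 then 1 else 0 := by
    intro i
    have h1 : (Algebra.traceForm K L).dualBasis (traceForm_nondegenerate K L) pb.basis i = _ :=
      Module.Basis.traceDual_powerBasis_eq pb i
    have h2 := (Algebra.traceForm K L).apply_dualBasis_left (traceForm_nondegenerate K L)
      pb.basis i (⟨0, hdim⟩ : Fin pb.dim)
    rw [h1, Algebra.traceForm_apply, pb.basis_eq_pow, pow_zero, mul_one] at h2
    rw [h2]
    simp [Fin.ext_iff, eq_comm]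
  intro m
  induction m using Nat.strong_induction_on with
  | _ m IH =>
    intro hm
    have hmle : m ≤ (minpolyDiv K pb.gen).natDegree := by omega
    have hspan := coeff_minpolyDiv_sub_pow_mem_span (R := K) (x := pb.gen) hint hmle
    have hz : ∀ z ∈ Submodule.span K ((pb.gen ^ ·) '' Set.Iio m),
        Algebra.trace K L (z / d) = 0 := by
      intro z hzmem
      induction hzmem using Submodule.span_induction with
      | mem x hx =>
        obtain ⟨j, hj, rfl⟩ := hx
        rw [Set.mem_Iio] at hj
        rw [IH j hj (by omega), if_neg (by omega)]
      | zero => simp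
      | add x y _ _ hx hy => rw [add_div, map_add, hx, hy, add_zero]
      | smul c x _ hx => rw [smul_div_assoc, map_smul, hx, smul_zero]
    have hgen : pb.gen ^ m =
        (minpolyDiv K pb.gen).coeff ((minpolyDiv K pb.gen).natDegree - m) -
          ((minpolyDiv K pb.gen).coeff ((minpolyDiv K pb.gen).natDegree - m) - pb.gen ^ m) := by
      ring
    rw [hgen, sub_div, map_sub, hz _ hspan, sub_zero,
      key ⟨(minpolyDiv K pb.gen).natDegree - m, by omega⟩]
    simp only [hnd]
    congr 1
    simp only [eq_iff_iff]
    omega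

theorem power_series_expansion_of_inverse {F : Type*} [Field F] [Fintype F] {k : ℕ}
    (p : Polynomial F) (hmon : p.Monic) (hirr : Irreducible p) (hdeg : p.natDegree = k)
    (h0 : p.eval 0 ≠ 0)
    {E : Type*} [Field E] [Algebra F E] (hE : Module.finrank F E = k)
    (qp : Polynomial F) (hqp : qp = Polynomial.C (p.coeff 0)⁻¹ * p.reverse)
    (α : E) (hα : Polynomial.aeval α qp = 0)
    (a : F)
    (ha : p.map (algebraMap F E) =
      Polynomial.C (algebraMap F E a) *
        ∏ i : Fin k, (1 - Polynomial.C (α ^ (Fintype.card F) ^ (i : ℕ)) * X)) :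
    ∀ r : ℕ,
      PowerSeries.coeff r ((p : PowerSeries F)⁻¹) =
        a⁻¹ * Algebra.trace F E (α ^ (k - 1 + r) / Polynomial.aeval α qp.derivative) := by
  classical
  have hc0 : p.coeff 0 ≠ 0 := by rwa [coeff_zero_eq_eval_zero]
  have hk : 0 < k := hdeg ▸ hirr.natDegree_pos
  have htd : p.natTrailingDegree = 0 := natTrailingDegree_eq_zero.mpr (Or.inr hc0)
  -- a = p.coeff 0
  have haa : a = p.coeff 0 := by
    have h1 := congrArg (Polynomial.eval 0) ha
    simp only [eval_mul, eval_C, eval_prod, eval_sub, eval_one, eval_X, mul_zero, sub_zero,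
      Finset.prod_const_one, mul_one] at h1
    rw [Polynomial.eval_zero_map] at h1
    exact ((algebraMap F E).injective (by rw [← h1, coeff_zero_eq_eval_zero])).symm
  have ha0 : a ≠ 0 := haa ▸ hc0
  -- qp basic facts
  have hqpirr : Irreducible qp := hqp ▸ my_qp_irreducible p hmon hirr hc0
  have hqpdeg : qp.natDegree = k := by
    rw [hqp, natDegree_C_mul (inv_ne_zero hc0), reverse_natDegree, htd, Nat.sub_zero, hdeg]
  have hqpmon : qp.Monic := by
    have : qp.leadingCoeff = 1 := by
      rw [hqp, leadingCoeff_mul, leadingCoeff_C, reverse_leadingCoeff, trailingCoeff, htd,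
        inv_mul_cancel₀ hc0]
    exact this
  have hmp : minpoly F α = qp := (minpoly.eq_of_irreducible_of_monic hqpirr hα hqpmon).symm
  have hint : IsIntegral F α := ⟨qp, hqpmon, hα⟩
  have hFD : FiniteDimensional F E := FiniteDimensional.of_finrank_pos (hE ▸ hk)
  have hsep : Algebra.IsSeparable F E := inferInstance
  -- power basis with generator α
  have htop : Algebra.adjoin F ({α} : Set E) = ⊤ := by
    have h1 : Module.finrank F (Algebra.adjoin F ({α} : Set E)) = k := by
      rw [(Algebra.adjoin.powerBasis hint).finrank, Algebra.adjoin.powerBasis_dim, hmp, hqpdeg]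
    rw [← Algebra.toSubmodule_eq_top]
    exact Submodule.eq_top_of_finrank_eq (by rw [← hE] at h1; exact h1)
  let pb : PowerBasis F E := (Algebra.adjoin.powerBasis hint).map
    ((Subalgebra.equivOfEq _ ⊤ htop).trans Subalgebra.topEquiv)
  have hgen : pb.gen = α := rfl
  have hpbdim : pb.dim = k := by
    show (Algebra.adjoin.powerBasis hint).dim = k
    rw [Algebra.adjoin.powerBasis_dim, hmp, hqpdeg]
  set d : E := Polynomial.aeval α qp.derivative with hd
  have htrace : ∀ m, m < k → Algebra.trace F E (α ^ m / d) = if m = k - 1 then 1 else 0 := by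
    have h := my_trace_pow_div pb
    rw [hgen, hmp, hpbdim] at h
    exact h
  -- the candidate power series
  set T : PowerSeries F := PowerSeries.mk fun r => Algebra.trace F E (α ^ (k - 1 + r) / d)
    with hT
  -- reverse p vanishes at α
  have hrev0 : Polynomial.aeval α p.reverse = 0 := by
    have h1 : Polynomial.aeval α qp = algebraMap F E (p.coeff 0)⁻¹ * Polynomial.aeval α p.reverse := by
      rw [hqp, map_mul, aeval_C]
    rw [hα] at h1
    rcases mul_eq_zero.mp h1.symm with h | h
    · exact absurd (map_eq_zero_iff _ (algebraMap F E).injective |>.mp h) (inv_ne_zero hc0)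
    · exact h
  have hndrev : p.reverse.natDegree = k := by
    rw [reverse_natDegree, htd, Nat.sub_zero, hdeg]
  have hsum0 : ∑ i ∈ Finset.range (k + 1), p.coeff i • α ^ (k - i) = 0 := by
    calc ∑ i ∈ Finset.range (k + 1), p.coeff i • α ^ (k - i)
        = ∑ i ∈ Finset.range (k + 1), p.reverse.coeff (k + 1 - 1 - i) • α ^ (k + 1 - 1 - i) := by
          refine Finset.sum_congr rfl fun i hi => ?_
          have hik : i ≤ k := by simpa [Nat.lt_succ_iff] using hi
          have h1 : k + 1 - 1 - i = k - i := by omega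
          rw [h1, coeff_reverse, hdeg, revAt_le (by omega), Nat.sub_sub_self hik]
      _ = ∑ j ∈ Finset.range (k + 1), p.reverse.coeff j • α ^ j :=
          Finset.sum_range_reflect (fun j => p.reverse.coeff j • α ^ j) (k + 1)
      _ = Polynomial.aeval α p.reverse := by
          rw [Polynomial.aeval_eq_sum_range, hndrev]
      _ = 0 := hrev0
  -- main identity
  have hmain : ∀ n : ℕ,
      Algebra.trace F E ((∑ x ∈ Finset.HasAntidiagonal.antidiagonal n, p.coeff x.1 • α ^ (k - 1 + x.2)) / d)
        = if n = 0 then a else 0 := by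
    intro n
    rcases Nat.eq_zero_or_pos n with hn | hn
    · subst hn
      rw [if_pos rfl]
      simp only [Finset.Nat.antidiagonal_zero, Finset.sum_singleton, add_zero]
      rw [smul_div_assoc, map_smul, htrace (k - 1) (by omega), if_pos rfl, smul_eq_mul,
        mul_one, haa]
    · rw [if_neg (by omega)]
      set Sn : E := ∑ x ∈ Finset.HasAntidiagonal.antidiagonal n, p.coeff x.1 • α ^ (k - 1 + x.2) with hSndef
      have hS : Sn = ∑ i ∈ Finset.range (n + 1), p.coeff i • α ^ ((k - 1 + n) - i) := by
        rw [hSndef, Finset.Nat.sum_antidiagonal_eq_sum_range_succ_mk]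
        refine Finset.sum_congr rfl fun i hi => ?_
        have : k - 1 + (n - i) = (k - 1 + n) - i := by
          have := Finset.mem_range.mp hi; omega
        rw [this]
      have hIco : Sn + (∑ i ∈ Finset.Ico (n + 1) (k + 1), p.coeff i • α ^ ((k - 1 + n) - i))
          = ∑ i ∈ Finset.range (max n k + 1), p.coeff i • α ^ ((k - 1 + n) - i) := by
        rcases le_total n k with h | h
        · have hmax : max n k = k := max_eq_right h
          rw [hmax, hS, Finset.range_eq_Ico, Finset.range_eq_Ico]
          exact Finset.sum_Ico_consecutive (fun i => p.coeff i • α ^ ((k - 1 + n) - i)) (Nat.zero_le _) (by omega)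
        · have hmax : max n k = n := max_eq_left h
          rw [hmax, Finset.Ico_eq_empty (by omega), Finset.sum_empty, add_zero, hS]
      have hU0 : ∑ i ∈ Finset.range (max n k + 1), p.coeff i • α ^ ((k - 1 + n) - i) = 0 := by
        have hsub : ∑ i ∈ Finset.range (max n k + 1), p.coeff i • α ^ ((k - 1 + n) - i)
            = ∑ i ∈ Finset.range (k + 1), p.coeff i • α ^ ((k - 1 + n) - i) := by
          refine (Finset.sum_subset (Finset.range_subset_range.mpr (by omega)) ?_).symm
          intro i hi1 hi2
          rw [Finset.mem_range] at hi1 hi2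
          rw [Polynomial.coeff_eq_zero_of_natDegree_lt (by omega), zero_smul]
        rw [hsub]
        calc ∑ i ∈ Finset.range (k + 1), p.coeff i • α ^ ((k - 1 + n) - i)
            = ∑ i ∈ Finset.range (k + 1), α ^ (n - 1) * (p.coeff i • α ^ (k - i)) := by
              refine Finset.sum_congr rfl fun i hi => ?_
              have hik : i ≤ k := by simpa [Nat.lt_succ_iff] using hi
              have he : (k - 1 + n) - i = (n - 1) + (k - i) := by omega
              rw [mul_smul_comm, ← pow_add, he]
          _ = α ^ (n - 1) * ∑ i ∈ Finset.range (k + 1), p.coeff i • α ^ (k - i) :=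
              (Finset.mul_sum _ _ _).symm
          _ = 0 := by rw [hsum0, mul_zero]
      have hSn : Sn = -∑ i ∈ Finset.Ico (n + 1) (k + 1), p.coeff i • α ^ ((k - 1 + n) - i) :=
        eq_neg_of_add_eq_zero_left (by rw [hIco, hU0])
      rw [hSn, neg_div, map_neg, Finset.sum_div, map_sum, Finset.sum_eq_zero, neg_zero]
      intro i hi
      obtain ⟨h1, h2⟩ := Finset.mem_Ico.mp hi
      rw [smul_div_assoc, map_smul, htrace _ (by omega), if_neg (by omega), smul_zero]
  have hPT : (p : PowerSeries F) * T = PowerSeries.C a := by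
    ext n
    rw [PowerSeries.coeff_mul]
    have hterm : ∀ x ∈ Finset.HasAntidiagonal.antidiagonal n,
        PowerSeries.coeff x.1 (p : PowerSeries F) * PowerSeries.coeff x.2 T
          = Algebra.trace F E (p.coeff x.1 • α ^ (k - 1 + x.2) / d) := by
      intro x _
      rw [Polynomial.coeff_coe, hT, PowerSeries.coeff_mk, smul_div_assoc, map_smul, smul_eq_mul]
    rw [Finset.sum_congr rfl hterm, ← map_sum, ← Finset.sum_div, hmain n,
      PowerSeries.coeff_C]
  -- conclude
  intro r
  have hinv : (p : PowerSeries F)⁻¹ = PowerSeries.C a⁻¹ * T := by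
    refine Eq.symm ?_
    rw [PowerSeries.eq_inv_iff_mul_eq_one (by
      rw [Polynomial.constantCoeff_coe]; exact hc0)]
    calc PowerSeries.C a⁻¹ * T * ↑p = PowerSeries.C a⁻¹ * (↑p * T) := by ring
      _ = PowerSeries.C a⁻¹ * PowerSeries.C a := by rw [hPT]
      _ = 1 := by rw [← map_mul, inv_mul_cancel₀ ha0, map_one]
  rw [hinv, PowerSeries.coeff_C_mul, hT, PowerSeries.coeff_mk]
end

section
/- Let p(x) ∈ F_q[x] be monic irreducible of degree k with p(0) ≠ 0 and p(1) ≠ 0, let q(x) be the monic reciprocal of p with root α, let β = α^{k-1}/(q'(α)(1 - α)), and let g(x) = (x^{q^k-1} - 1)/((x-1)p(x)). Then for 0 ≤ t ≤ q^k - 2, the coefficient of x^t in g(x) equals (1/a)·(Tr(β) - Tr(β α^{t+1})), where a ∈ F_q^* is the constant with p(x) = a·∏_{i=1}^k (1 - α_i x) and α_1,...,α_k are the roots of q. -/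
open Polynomial Finset

lemma sum_b_aux {E : Type*} [Field E] {k : ℕ} (hk : 0 < k) (r b : Fin k → E)
    (hrinj : Function.Injective r)
    (hb : ∀ j, b j * ((∏ i ∈ Finset.univ.erase j, (r j - r i)) * (1 - r j)) = r j ^ (k - 1)) :
    (∑ j, b j) * ∏ i, (1 - r i) = 1 := by
  classical
  set G : E[X] :=
    (∑ j, C (b j * (1 - r j)) * ∏ i ∈ Finset.univ.erase j, (X - C (r i))) - X ^ (k - 1) with hG
  have hdeg : G.natDegree < k := by
    have h1 : (∑ j, C (b j * (1 - r j)) * ∏ i ∈ Finset.univ.erase j, (X - C (r i))).natDegree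
        ≤ k - 1 := by
      apply Polynomial.natDegree_sum_le_of_forall_le
      intro j _
      refine le_trans (Polynomial.natDegree_mul_le) ?_
      rw [Polynomial.natDegree_C, zero_add]
      refine le_trans (Polynomial.natDegree_prod_le _ _) ?_
      have : ∀ i ∈ Finset.univ.erase j, (X - C (r i)).natDegree = 1 := fun i _ =>
        Polynomial.natDegree_X_sub_C _
      rw [Finset.sum_congr rfl this, Finset.sum_const, smul_eq_mul, mul_one,
        Finset.card_erase_of_mem (Finset.mem_univ j), Finset.card_univ, Fintype.card_fin]
    have h2 : (X ^ (k - 1) : E[X]).natDegree ≤ k - 1 := by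
      simp [Polynomial.natDegree_X_pow]
    calc G.natDegree ≤ max _ _ := Polynomial.natDegree_sub_le _ _
      _ ≤ k - 1 := max_le h1 h2
      _ < k := by omega
  have hzero : G = 0 := by
    apply Polynomial.eq_zero_of_natDegree_lt_card_of_eval_eq_zero G hrinj
    · intro l
      rw [hG]
      simp only [eval_sub, eval_finset_sum, eval_mul, eval_C, eval_prod, eval_sub, eval_X,
        eval_pow]
      rw [Finset.sum_eq_single l]
      · linear_combination hb l
      · intro j _ hjl
        have : ∏ i ∈ Finset.univ.erase j, (r l - r i) = 0 :=
          Finset.prod_eq_zero (Finset.mem_erase.mpr ⟨hjl.symm, Finset.mem_univ l⟩) (by ring)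
        rw [this]; ring
      · intro h; exact absurd (Finset.mem_univ l) h
    · simpa using hdeg
  have h1 : G.eval 1 = 0 := by rw [hzero]; simp
  rw [hG] at h1
  simp only [eval_sub, eval_finset_sum, eval_mul, eval_C, eval_prod, eval_sub, eval_X,
    eval_pow, one_pow, sub_eq_zero] at h1
  calc (∑ j, b j) * ∏ i, (1 - r i)
      = ∑ j, b j * ((1 - r j) * ∏ i ∈ Finset.univ.erase j, (1 - r i)) := by
        rw [Finset.sum_mul]
        refine Finset.sum_congr rfl fun j _ => ?_
        rw [← Finset.mul_prod_erase univ (fun i => 1 - r i) (Finset.mem_univ j)]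
    _ = ∑ j, b j * (1 - r j) * ∏ i ∈ Finset.univ.erase j, (1 - r i) :=
        Finset.sum_congr rfl fun j _ => by ring
    _ = 1 := h1

lemma star_aux {E : Type*} [Field E] {k : ℕ} (hk : 0 < k) (r b : Fin k → E) (a1 : E)
    (hrinj : Function.Injective r) (hr0 : ∀ i, r i ≠ 0) (hr1 : ∀ i, r i ≠ 1)
    (hb : ∀ j, b j * ((∏ i ∈ Finset.univ.erase j, (r j - r i)) * (1 - r j)) = r j ^ (k - 1)) :
    C (∑ i, b i) * (C a1 * ∏ i, (1 - C (r i) * X)) +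
      C a1 * ((X - 1) * ∑ i, C (b i * r i) * ∏ j ∈ Finset.univ.erase i, (1 - C (r j) * X))
      = C a1 := by
  classical
  rw [← sub_eq_zero]
  set D : E[X] := C (∑ i, b i) * (C a1 * ∏ i, (1 - C (r i) * X)) +
      C a1 * ((X - 1) * ∑ i, C (b i * r i) * ∏ j ∈ Finset.univ.erase i, (1 - C (r j) * X))
      - C a1 with hD
  have hfac : ∀ (s : Finset (Fin k)), (∏ j ∈ s, (1 - C (r j) * X) : E[X]).natDegree ≤ s.card := by
    intro s
    refine le_trans (Polynomial.natDegree_prod_le _ _) ?_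
    have : ∀ j ∈ s, (1 - C (r j) * X : E[X]).natDegree ≤ 1 := by
      intro j _
      refine le_trans (Polynomial.natDegree_sub_le _ _) ?_
      simp [Polynomial.natDegree_C_mul_X _ (hr0 j)]
    calc (∑ j ∈ s, (1 - C (r j) * X : E[X]).natDegree) ≤ ∑ j ∈ s, 1 :=
          Finset.sum_le_sum this
      _ = s.card := by simp
  have hdeg : D.natDegree < k + 1 := by
    have e1 : (C (∑ i, b i) * (C a1 * ∏ i, (1 - C (r i) * X)) : E[X]).natDegree ≤ k := by
      refine le_trans (Polynomial.natDegree_mul_le) ?_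
      refine le_trans (add_le_add (Polynomial.natDegree_C _).le Polynomial.natDegree_mul_le) ?_
      refine le_trans (add_le_add le_rfl (add_le_add (Polynomial.natDegree_C _).le
        (hfac Finset.univ))) ?_
      simp
    have e2 : (C a1 * ((X - 1) *
        ∑ i, C (b i * r i) * ∏ j ∈ Finset.univ.erase i, (1 - C (r j) * X)) : E[X]).natDegree
        ≤ k := by
      refine le_trans (Polynomial.natDegree_mul_le) ?_
      rw [Polynomial.natDegree_C, zero_add]
      refine le_trans (Polynomial.natDegree_mul_le) ?_
      have hX1 : ((X : E[X]) - 1).natDegree ≤ 1 := by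
        refine le_trans (Polynomial.natDegree_sub_le _ _) ?_
        simp
      have hsum : ((∑ i, C (b i * r i) * ∏ j ∈ Finset.univ.erase i, (1 - C (r j) * X)) :
          E[X]).natDegree ≤ k - 1 := by
        apply Polynomial.natDegree_sum_le_of_forall_le
        intro i _
        refine le_trans (Polynomial.natDegree_mul_le) ?_
        rw [Polynomial.natDegree_C, zero_add]
        refine le_trans (hfac _) ?_
        rw [Finset.card_erase_of_mem (Finset.mem_univ i), Finset.card_univ, Fintype.card_fin]
      omega
    calc D.natDegree ≤ max ((C (∑ i, b i) * (C a1 * ∏ i, (1 - C (r i) * X)) +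
          C a1 * ((X - 1) * ∑ i, C (b i * r i) *
            ∏ j ∈ Finset.univ.erase i, (1 - C (r j) * X))).natDegree)
          ((C a1 : E[X]).natDegree) := Polynomial.natDegree_sub_le _ _
      _ ≤ max (max _ _) _ := max_le_max (Polynomial.natDegree_add_le _ _) le_rfl
      _ < k + 1 := by
          rw [Polynomial.natDegree_C]
          have := max_lt (max_lt (Nat.lt_succ_of_le e1) (Nat.lt_succ_of_le e2))
            (Nat.succ_pos k)
          exact this
  have heval : ∀ o : Option (Fin k), D.eval (Option.elim o 1 (fun i => (r i)⁻¹)) = 0 := by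
    rintro (_ | l)
    · -- eval at 1
      rw [hD]
      simp only [Option.elim, eval_sub, eval_add, eval_mul, eval_C, eval_prod, eval_sub,
        eval_X, eval_one, eval_finset_sum, sub_self, zero_mul, mul_zero, add_zero]
      have := sum_b_aux hk r b hrinj hb
      simp only [eval_mul, eval_C, eval_X, eval_one, mul_one]
      linear_combination a1 * this
    · -- eval at (r l)⁻¹
      rw [hD]
      simp only [Option.elim, eval_sub, eval_add, eval_mul, eval_C, eval_prod, eval_sub,
        eval_X, eval_one, eval_finset_sum, mul_one]
      have hp0 : (∏ x : Fin k, (1 - r x * (r l)⁻¹)) = 0 :=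
        Finset.prod_eq_zero (Finset.mem_univ l)
          (by rw [mul_inv_cancel₀ (hr0 l), sub_self])
      have hsum : (∑ x : Fin k, b x * r x * ∏ j ∈ Finset.univ.erase x, (1 - r j * (r l)⁻¹))
          = b l * r l * ∏ j ∈ Finset.univ.erase l, (1 - r j * (r l)⁻¹) := by
        apply Finset.sum_eq_single l
        · intro i _ hil
          have : (∏ j ∈ Finset.univ.erase i, (1 - r j * (r l)⁻¹)) = 0 :=
            Finset.prod_eq_zero (Finset.mem_erase.mpr ⟨hil.symm, Finset.mem_univ l⟩)
              (by rw [mul_inv_cancel₀ (hr0 l), sub_self])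
          rw [this, mul_zero]
        · intro h; exact absurd (Finset.mem_univ l) h
      have hprod : (∏ j ∈ Finset.univ.erase l, (1 - r j * (r l)⁻¹))
          = (∏ j ∈ Finset.univ.erase l, (r l - r j)) * ((r l)⁻¹) ^ (k - 1) := by
        have : ∀ j ∈ Finset.univ.erase l, (1 - r j * (r l)⁻¹) = (r l - r j) * (r l)⁻¹ := by
          intro j _
          rw [sub_mul, mul_inv_cancel₀ (hr0 l)]
        rw [Finset.prod_congr rfl this, Finset.prod_mul_distrib, Finset.prod_const,
          Finset.card_erase_of_mem (Finset.mem_univ l), Finset.card_univ, Fintype.card_fin]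
      rw [hp0, hsum, hprod, mul_zero, mul_zero, zero_add]
      have h2 : ((r l)⁻¹ - 1) * r l = 1 - r l := by
        rw [sub_mul, inv_mul_cancel₀ (hr0 l), one_mul]
      have h3 : (r l) ^ (k - 1) * ((r l)⁻¹) ^ (k - 1) = 1 := by
        rw [← mul_pow, mul_inv_cancel₀ (hr0 l), one_pow]
      set Q := ∏ j ∈ Finset.univ.erase l, (r l - r j) with hQ
      set u := ((r l)⁻¹) ^ (k - 1) with hu
      set v := (r l) ^ (k - 1) with hv
      linear_combination (a1 * b l * Q * u) * h2 + (a1 * u) * hb l + a1 * h3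
  have hzero : D = 0 := by
    apply Polynomial.eq_zero_of_natDegree_lt_card_of_eval_eq_zero D
      (f := fun o : Option (Fin k) => Option.elim o 1 (fun i => (r i)⁻¹)) ?_ heval ?_
    · rintro (_ | i) (_ | j) h
      · rfl
      · exfalso; simp only [Option.elim] at h
        exact hr1 j (inv_eq_one.mp h.symm)
      · exfalso; simp only [Option.elim] at h
        exact hr1 i (inv_eq_one.mp h)
      · simp only [Option.elim, inv_inj] at h
        exact congrArg some (hrinj h)
    · simpa using hdeg
  exact hzero

lemma key_aux {E : Type*} [Field E] {k m : ℕ} (hk : 0 < k) (r b : Fin k → E) (a1 : E)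
    (hrinj : Function.Injective r) (hr0 : ∀ i, r i ≠ 0) (hr1 : ∀ i, r i ≠ 1)
    (hrm : ∀ i, r i ^ m = 1)
    (hb : ∀ j, b j * ((∏ i ∈ Finset.univ.erase j, (r j - r i)) * (1 - r j)) = r j ^ (k - 1)) :
    (X - 1) * (C a1 * ∏ i, (1 - C (r i) * X)) *
      (∑ t ∈ Finset.range m, C (∑ i, (b i - b i * r i ^ (t + 1))) * X ^ t)
    = C a1 * (X ^ m - 1) := by
  classical
  set pE : E[X] := C a1 * ∏ i, (1 - C (r i) * X) with hpE
  set A : E[X] := ∑ t ∈ Finset.range m, X ^ t with hA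
  set U : Fin k → E[X] := fun i => ∑ t ∈ Finset.range m, C (r i ^ (t + 1)) * X ^ t with hU
  have hP : (∑ t ∈ Finset.range m, C (∑ i, (b i - b i * r i ^ (t + 1))) * X ^ t)
      = ∑ i, (C (b i) * A - C (b i) * U i) := by
    rw [hA, hU]
    simp only [map_sum, Finset.sum_mul, Finset.mul_sum, map_sub, map_mul, sub_mul]
    rw [Finset.sum_comm]
    refine Finset.sum_congr rfl fun i _ => ?_
    rw [← Finset.sum_sub_distrib]
    refine Finset.sum_congr rfl fun t _ => ?_
    ring
  have hgeom : A * (X - 1) = X ^ m - 1 := geom_sum_mul X m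
  have hUi : ∀ i, (1 - C (r i) * X) * U i = C (r i) * (1 - X ^ m) := by
    intro i
    have e1 : U i = C (r i) * ∑ t ∈ Finset.range m, (C (r i) * X) ^ t := by
      rw [hU, Finset.mul_sum]
      refine Finset.sum_congr rfl fun t _ => ?_
      rw [mul_pow, ← map_pow, ← mul_assoc, ← map_mul, ← pow_succ']
    have e2 : (∑ t ∈ Finset.range m, (C (r i) * X) ^ t) * (C (r i) * X - 1)
        = (C (r i) * X) ^ m - 1 := geom_sum_mul _ m
    have e3 : (C (r i) * X) ^ m = X ^ m := by
      rw [mul_pow, ← map_pow, hrm i, map_one, one_mul]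
    rw [e1]
    linear_combination (-(C (r i))) * e2 - C (r i) * e3
  have per : ∀ i : Fin k, (X - 1) * pE * (C (b i) * A - C (b i) * U i)
      = (X ^ m - 1) * (C (b i) * pE +
        C a1 * (C (b i * r i) * ((X - 1) * ∏ j ∈ Finset.univ.erase i, (1 - C (r j) * X)))) := by
    intro i
    have hsplit : pE = C a1 * ((1 - C (r i) * X) * ∏ j ∈ Finset.univ.erase i, (1 - C (r j) * X)) := by
      rw [hpE, ← Finset.mul_prod_erase Finset.univ (fun j => 1 - C (r j) * X) (Finset.mem_univ i)]
    have e4 : (C (b i * r i) : E[X]) = C (b i) * C (r i) := map_mul C _ _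
    linear_combination (C (b i) * pE) * hgeom
      + (-(C (b i) * (X - 1) * C a1 * ∏ j ∈ Finset.univ.erase i, (1 - C (r j) * X))) * hUi i
      + (-(C (b i) * (X - 1) * U i)) * hsplit
      + (-((X ^ m - 1) * C a1 * (X - 1) * ∏ j ∈ Finset.univ.erase i, (1 - C (r j) * X))) * e4
  have hstar := star_aux hk r b a1 hrinj hr0 hr1 hb
  calc (X - 1) * pE * (∑ t ∈ Finset.range m, C (∑ i, (b i - b i * r i ^ (t + 1))) * X ^ t)
      = ∑ i, (X - 1) * pE * (C (b i) * A - C (b i) * U i) := by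
        rw [hP, Finset.mul_sum]
    _ = ∑ i, (X ^ m - 1) * (C (b i) * pE +
        C a1 * (C (b i * r i) * ((X - 1) * ∏ j ∈ Finset.univ.erase i, (1 - C (r j) * X)))) :=
        Finset.sum_congr rfl fun i _ => per i
    _ = (X ^ m - 1) * (C (∑ i, b i) * pE +
        C a1 * ((X - 1) * ∑ i, C (b i * r i) * ∏ j ∈ Finset.univ.erase i, (1 - C (r j) * X))) := by
        rw [← Finset.mul_sum]
        congr 1
        rw [Finset.sum_add_distrib, ← Finset.sum_mul, ← map_sum, ← Finset.mul_sum]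
        congr 1
        congr 1
        rw [Finset.mul_sum]
        exact Finset.sum_congr rfl fun i _ => by ring
    _ = (X ^ m - 1) * C a1 := by rw [hstar]
    _ = C a1 * (X ^ m - 1) := mul_comm _ _

theorem coeff_g_eq_trace_difference {F : Type*} [Field F] [Fintype F] {k : ℕ}
    (p : Polynomial F) (hmon : p.Monic) (hirr : Irreducible p) (hdeg : p.natDegree = k)
    (h0 : p.eval 0 ≠ 0) (h1 : p.eval 1 ≠ 0)
    {E : Type*} [Field E] [Algebra F E] (hE : Module.finrank F E = k)
    (qp : Polynomial F) (hqp : qp = Polynomial.C (p.coeff 0)⁻¹ * p.reverse)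
    (α : E) (hα : Polynomial.aeval α qp = 0)
    (a : F)
    (ha : p.map (algebraMap F E) =
      Polynomial.C (algebraMap F E a) *
        ∏ i : Fin k, (1 - Polynomial.C (α ^ (Fintype.card F) ^ (i : ℕ)) * X))
    (β : E) (hβ : β = α ^ (k - 1) / (Polynomial.aeval α qp.derivative * (1 - α)))
    (g : Polynomial F)
    (hg : (X - 1) * p * g = X ^ (Fintype.card F ^ k - 1) - 1) :
    ∀ t : ℕ, t ≤ Fintype.card F ^ k - 2 →
      g.coeff t =
        a⁻¹ * (Algebra.trace F E β - Algebra.trace F E (β * α ^ (t + 1))) := by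
  classical
  intro t ht
  have hk : 0 < k := hdeg ▸ hirr.natDegree_pos
  haveI : FiniteDimensional F E := FiniteDimensional.of_finrank_pos (hE ▸ hk)
  haveI : Finite E := Module.finite_of_finite F
  haveI : Fintype E := Fintype.ofFinite E
  have hq2 : 2 ≤ Fintype.card F := Fintype.one_lt_card
  have hcardE : Fintype.card E = Fintype.card F ^ k := by
    rw [Module.card_eq_pow_finrank (K := F) (V := E), hE]
  have hap : Function.Injective (algebraMap F E) := (algebraMap F E).injective
  set q : ℕ := Fintype.card F with hq
  set r : Fin k → E := fun i => α ^ q ^ (i : ℕ) with hr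
  -- a ≠ 0 and r i ≠ 1, from evaluating ha at 1
  have heval1 : algebraMap F E (p.eval 1) = algebraMap F E a * ∏ i, (1 - r i) := by
    have h := congrArg (Polynomial.eval (1 : E)) ha
    rw [Polynomial.eval_one_map] at h
    simpa [Polynomial.eval_prod] using h
  have ha1ne : algebraMap F E a ≠ 0 := by
    intro h
    rw [h, zero_mul] at heval1
    exact h1 (hap (heval1.trans (map_zero _).symm))
  have ha0 : a ≠ 0 := fun h => ha1ne (by rw [h, map_zero])
  have hr1 : ∀ i, r i ≠ 1 := by
    have hne : algebraMap F E a * ∏ i, (1 - r i) ≠ 0 := by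
      rw [← heval1]
      exact fun h => h1 (hap (h.trans (map_zero _).symm))
    have hprod : (∏ i, (1 - r i)) ≠ 0 := fun h => hne (by rw [h, mul_zero])
    intro i hi
    exact (Finset.prod_ne_zero_iff.mp hprod i (Finset.mem_univ i)) (by rw [hi, sub_self])
  -- α ≠ 0
  have hα0 : α ≠ 0 := by
    intro h
    have hmap : (p.map (algebraMap F E)).natDegree = k := by
      rw [Polynomial.natDegree_map, hdeg]
    rw [ha] at hmap
    have hone : ∀ i : Fin k, (1 - C (α ^ q ^ (i : ℕ)) * X : E[X]) = 1 := by
      intro i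
      have hqi : q ^ (i : ℕ) ≠ 0 := pow_ne_zero _ (by omega)
      rw [h, zero_pow hqi, map_zero, zero_mul, sub_zero]
    rw [Finset.prod_congr rfl (fun i _ => hone i), Finset.prod_const_one, mul_one,
      Polynomial.natDegree_C] at hmap
    omega
  have hr0 : ∀ i, r i ≠ 0 := fun i => pow_ne_zero _ hα0
  -- injectivity of r
  have hrinj : Function.Injective r := by
    have hsep : p.Separable := PerfectField.separable_of_irreducible hirr
    have hsq : Squarefree (p.map (algebraMap F E)) := hsep.map.squarefree
    intro i j hij
    by_contra hne
    have hji : j ∈ Finset.univ.erase i := Finset.mem_erase.mpr ⟨fun hh => hne hh.symm, Finset.mem_univ j⟩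
    have hdvd : (1 - C (r i) * X) * (1 - C (r i) * X) ∣ p.map (algebraMap F E) := by
      rw [ha, ← Finset.mul_prod_erase Finset.univ (fun l => 1 - C (r l) * X) (Finset.mem_univ i),
        ← Finset.mul_prod_erase (Finset.univ.erase i) (fun l => 1 - C (r l) * X) hji]
      exact ⟨C (algebraMap F E a) * ∏ l ∈ (Finset.univ.erase i).erase j, (1 - C (r l) * X),
        by rw [hij]; ring⟩
    have hunit := hsq _ hdvd
    have hlin : (1 - C (r i) * X : E[X]) = C (-(r i)) * X + C 1 := by
      rw [map_neg, map_one]; ring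
    have hdeg1 : (1 - C (r i) * X : E[X]).degree = 1 := by
      rw [hlin, Polynomial.degree_linear (neg_ne_zero.mpr (hr0 i))]
    rw [Polynomial.degree_eq_zero_of_isUnit hunit] at hdeg1
    exact absurd hdeg1 (by norm_num)
  -- r i ^ (q ^ k - 1) = 1
  have hrN : ∀ i, r i ^ (q ^ k - 1) = 1 := fun i => by
    rw [← hcardE]; exact FiniteField.pow_card_sub_one_eq_one _ (hr0 i)
  -- Frobenius alg homs
  obtain ⟨φ, hφ⟩ : ∃ φ : Fin k → (E →ₐ[F] E), ∀ i x, φ i x = x ^ q ^ (i : ℕ) := by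
    obtain ⟨c, hc⟩ := CharP.exists F
    haveI := hc
    have hcp : c.Prime := CharP.char_is_prime F c
    haveI : Fact c.Prime := ⟨hcp⟩
    haveI : CharP E c := charP_of_injective_algebraMap hap c
    obtain ⟨n, -, hcard⟩ := FiniteField.card F c
    have hmkc : ∀ i : Fin k, ∀ x : F,
        (iterateFrobenius E c ((n : ℕ) * (i : ℕ))) (algebraMap F E x) = algebraMap F E x := by
      intro i x
      show (algebraMap F E x) ^ c ^ ((n : ℕ) * (i : ℕ)) = algebraMap F E x
      rw [← map_pow, pow_mul, ← hcard, FiniteField.pow_card_pow]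
    refine ⟨fun i => AlgHom.mk (iterateFrobenius E c ((n : ℕ) * (i : ℕ))) (hmkc i),
      fun i x => ?_⟩
    show x ^ c ^ ((n : ℕ) * (i : ℕ)) = x ^ q ^ (i : ℕ)
    rw [pow_mul, ← hcard]
  set b : Fin k → E := fun i => φ i β with hb'
  -- qp is monic of degree k
  have hc0 : p.coeff 0 ≠ 0 := by rwa [Polynomial.coeff_zero_eq_eval_zero]
  have htr0 : p.natTrailingDegree = 0 := Polynomial.natTrailingDegree_eq_zero.mpr (Or.inr hc0)
  have hqdeg : qp.natDegree = k := by
    rw [hqp, Polynomial.natDegree_C_mul_eq_of_mul_eq_one (mul_inv_cancel₀ hc0),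
      Polynomial.reverse_natDegree, htr0, hdeg]
    omega
  have hqmonic : qp.Monic := by
    unfold Polynomial.Monic
    rw [hqp, Polynomial.leadingCoeff_mul, Polynomial.leadingCoeff_C,
      Polynomial.reverse_leadingCoeff, Polynomial.trailingCoeff, htr0,
      inv_mul_cancel₀ hc0]
  -- qE = nodal
  have hroots : ∀ j : Fin k, Polynomial.aeval (r j) qp = 0 := by
    intro j
    have h1' : Polynomial.aeval ((φ j) α) qp = (φ j) (Polynomial.aeval α qp) :=
      Polynomial.aeval_algHom_apply (φ j) α qp
    rw [hα, map_zero] at h1'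
    rw [show r j = (φ j) α from (hφ j α).symm]
    exact h1'
  have hqE : qp.map (algebraMap F E) = ∏ i, (X - C (r i)) := by
    have hq1 : (qp.map (algebraMap F E)).Monic := hqmonic.map _
    have hq2 : (qp.map (algebraMap F E)).natDegree = k := by
      rw [Polynomial.natDegree_map, hqdeg]
    have hnod : (∏ i : Fin k, (X - C (r i)) : E[X]).Monic :=
      monic_prod_of_monic _ _ fun i _ => monic_X_sub_C _
    have hnoddeg : (∏ i : Fin k, (X - C (r i)) : E[X]).natDegree = k := by
      rw [Polynomial.natDegree_prod _ _ (fun i _ => Polynomial.X_sub_C_ne_zero (r i))]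
      simp
    by_cases hsub : qp.map (algebraMap F E) - ∏ i, (X - C (r i)) = 0
    · exact sub_eq_zero.mp hsub
    exfalso
    apply hsub
    apply Polynomial.eq_zero_of_natDegree_lt_card_of_eval_eq_zero _ hrinj
    · intro j
      rw [Polynomial.eval_sub]
      have e1 : Polynomial.eval (r j) (qp.map (algebraMap F E)) = 0 := by
        rw [Polynomial.eval_map, ← Polynomial.aeval_def, hroots j]
      have e2 : Polynomial.eval (r j) (∏ i : Fin k, (X - C (r i))) = 0 := by
        rw [Polynomial.eval_prod]
        exact Finset.prod_eq_zero (Finset.mem_univ j) (by simp)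
      rw [e1, e2, sub_zero]
    · have hdegsub : (qp.map (algebraMap F E) - ∏ i, (X - C (r i))).degree
          < (qp.map (algebraMap F E)).degree :=
        Polynomial.degree_sub_lt (by rw [Polynomial.degree_eq_natDegree hq1.ne_zero,
          Polynomial.degree_eq_natDegree hnod.ne_zero, hq2, hnoddeg])
          hq1.ne_zero (by rw [hq1.leadingCoeff, hnod.leadingCoeff])
      have h3 := Polynomial.natDegree_lt_natDegree hsub hdegsub
      simp only [Fintype.card_fin]
      omega
  -- derivative values
  have hqd : ∀ j : Fin k, Polynomial.aeval (r j) qp.derivative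
      = ∏ i ∈ Finset.univ.erase j, (r j - r i) := by
    intro j
    have hnodeq : qp.map (algebraMap F E) = Lagrange.nodal Finset.univ r := by
      rw [hqE, Lagrange.nodal]
    have e0 : Polynomial.aeval (r j) (qp.derivative)
        = Polynomial.eval (r j) ((qp.derivative).map (algebraMap F E)) := by
      rw [Polynomial.eval_map, Polynomial.aeval_def]
    have e1 := congrArg
      (fun f : E[X] => Polynomial.eval (r j) (Polynomial.derivative f)) hnodeq
    rw [e0, ← Polynomial.derivative_map, e1,
      Lagrange.eval_nodal_derivative_eval_node_eq (Finset.mem_univ j), Lagrange.eval_nodal]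
  -- the b identity
  have hprodne : ∀ j : Fin k, (∏ i ∈ Finset.univ.erase j, (r j - r i)) ≠ 0 := by
    intro j
    rw [Finset.prod_ne_zero_iff]
    intro i hi
    exact sub_ne_zero.mpr fun h => (Finset.mem_erase.mp hi).1 (hrinj h.symm)
  have hb : ∀ j, b j * ((∏ i ∈ Finset.univ.erase j, (r j - r i)) * (1 - r j)) = r j ^ (k - 1) := by
    intro j
    have hbj : b j = r j ^ (k - 1) /
        (Polynomial.aeval (r j) qp.derivative * (1 - r j)) := by
      have hcomm : (φ j) (Polynomial.aeval α qp.derivative)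
          = Polynomial.aeval ((φ j) α) qp.derivative :=
        (Polynomial.aeval_algHom_apply (φ j) α qp.derivative).symm
      show (φ j) β = _
      rw [hβ, map_div₀, map_pow, map_mul, map_sub, map_one, hcomm, hφ j α]
    rw [hbj, hqd j]
    exact div_mul_cancel₀ _ (mul_ne_zero (hprodne j) (sub_ne_zero.mpr fun h => hr1 j h.symm))
  -- trace formula
  have htr : ∀ z : E, algebraMap F E (Algebra.trace F E z) = ∑ i, φ i z := by
    intro z
    set σ : Fin k → (E ≃ₐ[F] E) :=
      fun i => AlgEquiv.ofBijective (φ i) (AlgHom.normal_bijective F E E (φ i)) with hσ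
    have hbij : Function.Bijective σ := by
      rw [Fintype.bijective_iff_injective_and_card]
      constructor
      · intro i j h
        apply hrinj
        have : σ i α = σ j α := by rw [h]
        simpa [hσ, hφ] using this
      · rw [Fintype.card_fin, ← hE, ← Nat.card_eq_fintype_card, IsGalois.card_aut_eq_finrank]
    rw [trace_eq_sum_automorphisms]
    exact (Fintype.sum_bijective σ hbij (fun i => (φ i) z) (fun τ => τ z) (fun i => rfl)).symm
  -- main identity and cancellation
  have hkey := key_aux (m := q ^ k - 1) hk r b (algebraMap F E a) hrinj hr0 hr1 hrN hb
  have hgE : (X - 1) * (p.map (algebraMap F E)) * (g.map (algebraMap F E))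
      = X ^ (q ^ k - 1) - 1 := by
    have h := congrArg (Polynomial.map (algebraMap F E)) hg
    simpa only [Polynomial.map_mul, Polynomial.map_sub, Polynomial.map_pow,
      Polynomial.map_X, Polynomial.map_one] using h
  have hcancel : (∑ s ∈ Finset.range (q ^ k - 1), C (∑ i, (b i - b i * r i ^ (s + 1))) * X ^ s)
      = C (algebraMap F E a) * g.map (algebraMap F E) := by
    have hXne : ((X : E[X]) - 1) ≠ 0 := by
      have : ((X : E[X]) - 1) = X - C 1 := by rw [map_one]
      rw [this]
      exact Polynomial.X_sub_C_ne_zero 1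
    have hne : ((X : E[X]) - 1) * (p.map (algebraMap F E)) ≠ 0 :=
      mul_ne_zero hXne (hmon.map (algebraMap F E)).ne_zero
    apply mul_left_cancel₀ hne
    have e1 : ((X : E[X]) - 1) * (p.map (algebraMap F E)) *
        (∑ s ∈ Finset.range (q ^ k - 1), C (∑ i, (b i - b i * r i ^ (s + 1))) * X ^ s)
        = C (algebraMap F E a) * (X ^ (q ^ k - 1) - 1) := by
      rw [ha]; exact hkey
    have e2 : ((X : E[X]) - 1) * (p.map (algebraMap F E)) *
        (C (algebraMap F E a) * g.map (algebraMap F E))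
        = C (algebraMap F E a) * (X ^ (q ^ k - 1) - 1) := by
      rw [← hgE]; ring
    exact e1.trans e2.symm
  -- extract coefficient t
  have htm : t < q ^ k - 1 := by
    have : 2 ≤ q ^ k := le_trans hq2 (Nat.le_self_pow hk.ne' q)
    omega
  have hcoeff : (∑ i, (b i - b i * r i ^ (t + 1)))
      = algebraMap F E a * algebraMap F E (g.coeff t) := by
    have h := congrArg (fun f : E[X] => f.coeff t) hcancel
    simp only [Polynomial.finset_sum_coeff, Polynomial.coeff_C_mul, Polynomial.coeff_X_pow,
      Polynomial.coeff_map, mul_ite, mul_one, mul_zero] at h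
    rw [Finset.sum_eq_single t (fun s _ hs => by rw [if_neg (fun hh => hs hh.symm)])
      (fun hnot => absurd (Finset.mem_range.mpr htm) hnot), if_pos rfl] at h
    exact h
  -- finish
  have hfin : algebraMap F E (Algebra.trace F E β - Algebra.trace F E (β * α ^ (t + 1)))
      = algebraMap F E (a * g.coeff t) := by
    rw [map_sub, htr, htr, map_mul]
    calc (∑ i, (φ i) β) - ∑ i, (φ i) (β * α ^ (t + 1))
        = ∑ i, (b i - b i * r i ^ (t + 1)) := by
          rw [← Finset.sum_sub_distrib]
          refine Finset.sum_congr rfl fun i _ => ?_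
          rw [map_mul, map_pow, hφ i α]
      _ = algebraMap F E a * algebraMap F E (g.coeff t) := hcoeff
  have hfin2 := hap hfin
  rw [hfin2, inv_mul_cancel_left₀ ha0]
end

section
/- Let p(x) ∈ F_q[x] be monic irreducible of degree k with p(0) ≠ 0 and p(1) ≠ 0, and let q(x) be its monic reciprocal with root α. Set β = α^{k-1}/(q'(α)(1 - α)). Then Tr_{F_{q^k}/F_q}(β) = 1/q(1), and in particular Tr(β) ≠ 0. -/
open Polynomial

private lemma rev_rev {R : Type*} [Semiring R] (f : Polynomial R) (hf : f.coeff 0 ≠ 0) :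
    f.reverse.reverse = f := by
  have hn : f.reverse.natDegree = f.natDegree := by
    rw [reverse_natDegree, natTrailingDegree_eq_zero.mpr (Or.inr hf), Nat.sub_zero]
  ext n
  rw [coeff_reverse, coeff_reverse, hn, revAt_invol]

theorem trace_beta_eq_inv_q_one {F : Type*} [Field F] [Fintype F] {k : ℕ}
    (p : Polynomial F) (hmon : p.Monic) (hirr : Irreducible p) (hdeg : p.natDegree = k)
    (h0 : p.eval 0 ≠ 0) (h1 : p.eval 1 ≠ 0)
    {E : Type*} [Field E] [Algebra F E] (hE : Module.finrank F E = k)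
    (qp : Polynomial F) (hqp : qp = Polynomial.C (p.coeff 0)⁻¹ * p.reverse)
    (α : E) (hα : Polynomial.aeval α qp = 0)
    (β : E) (hβ : β = α ^ (k - 1) / (Polynomial.aeval α qp.derivative * (1 - α))) :
    Algebra.trace F E β = (qp.eval 1)⁻¹ ∧ Algebra.trace F E β ≠ 0 := by
  classical
  have hc0 : p.coeff 0 ≠ 0 := by rwa [coeff_zero_eq_eval_zero]
  have hk : 0 < k := hdeg ▸ hirr.natDegree_pos
  have hrevdeg : p.reverse.natDegree = k := by
    rw [reverse_natDegree, natTrailingDegree_eq_zero.mpr (Or.inr hc0), Nat.sub_zero, hdeg]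
  have hqdeg : qp.natDegree = k := by
    rw [hqp, natDegree_C_mul (inv_ne_zero hc0), hrevdeg]
  have hqmonic : qp.Monic := by
    have : qp.leadingCoeff = 1 := by
      rw [hqp, leadingCoeff_mul, leadingCoeff_C, reverse_leadingCoeff, trailingCoeff,
        natTrailingDegree_eq_zero.mpr (Or.inr hc0), inv_mul_cancel₀ hc0]
    exact this
  have hrev1 : p.reverse.eval 1 = p.eval 1 := by
    haveI : Invertible (1:F) := invertibleOne
    have := eval₂_reverse_mul_pow (RingHom.id F) (1 : F) p
    simpa [eval₂_at_one] using this
  have hq1 : qp.eval 1 ≠ 0 := by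
    rw [hqp, eval_mul, eval_C, hrev1]
    exact mul_ne_zero (inv_ne_zero hc0) h1
  have hqirr : Irreducible qp := by
    constructor
    · intro h
      have := natDegree_eq_zero_of_isUnit h
      omega
    · intro a b hab
      have hq0 : qp.coeff 0 ≠ 0 := by
        rw [hqp, coeff_C_mul, coeff_zero_reverse, hmon.leadingCoeff, mul_one]
        exact inv_ne_zero hc0
      have hab0 : a.coeff 0 * b.coeff 0 ≠ 0 := by rwa [← mul_coeff_zero, ← hab]
      have ha0 : a.coeff 0 ≠ 0 := left_ne_zero_of_mul hab0
      have hb0 : b.coeff 0 ≠ 0 := right_ne_zero_of_mul hab0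
      have hp_eq : p = C (p.coeff 0) * a.reverse * b.reverse := by
        have h2 : p.reverse = C (p.coeff 0) * qp := by
          rw [hqp, ← mul_assoc, ← C_mul, mul_inv_cancel₀ hc0, C_1, one_mul]
        calc p = p.reverse.reverse := (rev_rev p hc0).symm
        _ = (C (p.coeff 0) * (a * b)).reverse := by rw [h2, hab]
        _ = C (p.coeff 0) * a.reverse * b.reverse := by
            rw [reverse_mul_of_domain, reverse_mul_of_domain, reverse_C, mul_assoc]
      have hnatrev : ∀ f : Polynomial F, f.coeff 0 ≠ 0 → f.reverse.natDegree = f.natDegree := by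
        intro f hf
        rw [reverse_natDegree, natTrailingDegree_eq_zero.mpr (Or.inr hf), Nat.sub_zero]
      rcases hirr.2 hp_eq with h | h
      · left
        have hua : IsUnit a.reverse := isUnit_of_mul_isUnit_right h
        have : a.natDegree = 0 := by rw [← hnatrev a ha0]; exact natDegree_eq_zero_of_isUnit hua
        obtain ⟨x, hx⟩ := natDegree_eq_zero.mp this
        rw [← hx]
        refine isUnit_C.mpr (isUnit_iff_ne_zero.mpr ?_)
        intro hx0
        exact ha0 (by rw [← hx, hx0]; simp)
      · right
        have : b.natDegree = 0 := by rw [← hnatrev b hb0]; exact natDegree_eq_zero_of_isUnit h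
        obtain ⟨x, hx⟩ := natDegree_eq_zero.mp this
        rw [← hx]
        refine isUnit_C.mpr (isUnit_iff_ne_zero.mpr ?_)
        intro hx0
        exact hb0 (by rw [← hx, hx0]; simp)
  haveI : FiniteDimensional F E := FiniteDimensional.of_finrank_pos (by omega)
  haveI : Algebra.IsAlgebraic F E := Algebra.IsAlgebraic.of_finite F E
  have hint : IsIntegral F α := Algebra.IsIntegral.isIntegral α
  have hmin : minpoly F α = qp := (minpoly.eq_of_irreducible_of_monic hqirr hα hqmonic).symm
  have hndeg : (minpoly F α).natDegree = k := by rw [hmin, hqdeg]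
  have hD : aeval α (derivative (minpoly F α)) ≠ 0 :=
    (Algebra.IsSeparable.isSeparable F α).aeval_derivative_ne_zero (minpoly.aeval F α)
  set D := aeval α (derivative (minpoly F α)) with hDdef
  have hq1' : algebraMap F E (qp.eval 1) ≠ 0 := by
    simpa using hq1
  have hkey : (minpolyDiv F α).eval 1 * (1 - α) = algebraMap F E (qp.eval 1) := by
    have h3 := congrArg (Polynomial.eval (1 : E)) (minpolyDiv_spec F α)
    rw [hmin] at h3
    simpa [eval_map, eval₂_at_one] using h3
  have h1α : (1 : E) - α ≠ 0 := by
    intro h; exact hq1' (by rw [← hkey, h, mul_zero])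
  have hMe : (minpolyDiv F α).eval 1 ≠ 0 := by
    intro h; exact hq1' (by rw [← hkey, h, zero_mul])
  -- power basis
  haveI : Nonempty (Fin (minpoly F α).natDegree) := ⟨⟨0, by omega⟩⟩
  let pb : PowerBasis F E :=
    { gen := α
      dim := (minpoly F α).natDegree
      basis := basisOfLinearIndependentOfCardEqFinrank (linearIndependent_pow α)
        (by simp [hndeg, hE])
      basis_eq_pow := fun i => by rw [coe_basisOfLinearIndependentOfCardEqFinrank] }
  let jj : Fin (minpoly F α).natDegree := ⟨k - 1, by omega⟩
  have hbjj : pb.basis jj = α ^ (k - 1) := pb.basis_eq_pow jj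
  have htr : ∀ i : Fin (minpoly F α).natDegree,
      Algebra.trace F E ((minpolyDiv F α).coeff i / D * α ^ (k - 1)) = if jj = i then 1 else 0 := by
    intro i
    have h2 := (Algebra.traceForm F E).apply_dualBasis_left (traceForm_nondegenerate F E)
      pb.basis i jj
    rw [← Module.Basis.traceDual_def, Module.Basis.traceDual_powerBasis_eq pb i, hbjj] at h2
    rw [← h2, Algebra.traceForm_apply]
  have hbeta' : β = (qp.eval 1)⁻¹ • ((minpolyDiv F α).eval 1 * α ^ (k - 1) / D) := by
    rw [hβ, Algebra.smul_def, map_inv₀,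
      show Polynomial.aeval α (derivative qp) = D by rw [hDdef, hmin]]
    field_simp
    linear_combination (-(α ^ (k - 1))) * hkey
  have hM1 : (minpolyDiv F α).eval 1 = ∑ i : Fin (minpoly F α).natDegree,
      (minpolyDiv F α).coeff i := by
    have h4 : (minpolyDiv F α).natDegree + 1 = (minpoly F α).natDegree :=
      natDegree_minpolyDiv_succ hint
    rw [eval_eq_sum_range, h4, Fin.sum_univ_eq_sum_range]
    simp
  have htrace : Algebra.trace F E β = (qp.eval 1)⁻¹ := by
    rw [hbeta', map_smul, smul_eq_mul]
    have h5 : (minpolyDiv F α).eval 1 * α ^ (k - 1) / D =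
        ∑ i : Fin (minpoly F α).natDegree, (minpolyDiv F α).coeff i / D * α ^ (k - 1) := by
      rw [hM1, Finset.sum_mul, Finset.sum_div]
      refine Finset.sum_congr rfl fun i _ => ?_
      ring
    rw [h5, map_sum]
    simp only [htr]
    rw [Finset.sum_ite_eq]
    simp
  exact ⟨htrace, htrace ▸ inv_ne_zero hq1⟩
end
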